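/- arXiv:0810.2249 — 5 statements merged into one kernel-verified Lean document; each statement's English description precedes it below -/
import Mathlib

section
/- The radius of convergence of A satisfies ρ_a ≥ min{ρ, 1/(|s|·a_1)} (with 1/(|s|·a_1) = ∞ when a_1 = 0). -/
open scoped BigOperators ENNReal NNReal

/-- The radius of convergence of the power series with real coefficients `c`. -/
noncomputable def seriesRadius (c : ℕ → ℝ) : ℝ≥0∞ :=
  ⨆ (r : ℝ≥0) (_ : Summable fun n => |c n| * (r : ℝ) ^ n), (r : ℝ≥0∞)

open Finset

noncomputable def Ecoef (S σ' : ℝ) (n j : ℕ) : ℝ :=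
  (S * j - σ') * (Nat.factorial j) * (Nat.factorial (n-j)) / (Nat.factorial n)

lemma aux_two_pow_le_centralBinom (n : ℕ) : 2 ^ n ≤ Nat.centralBinom n := by
  induction n with
  | zero => simp [Nat.centralBinom]
  | succ n ih =>
    have h := Nat.succ_mul_centralBinom_succ n
    have h2 : (n+1) * (2 * Nat.centralBinom n) ≤ (n+1) * Nat.centralBinom (n+1) := by
      rw [h]; nlinarith [Nat.centralBinom_pos n]
    have h3 := Nat.le_of_mul_le_mul_left h2 (Nat.succ_pos n)
    calc 2^(n+1) = 2 * 2^n := by ring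
    _ ≤ 2 * Nat.centralBinom n := by omega
    _ ≤ _ := h3

lemma aux_pow_le_choose {k m : ℕ} (h : 2*k ≤ m) : 2^k ≤ m.choose k := by
  calc 2^k ≤ Nat.centralBinom k := aux_two_pow_le_centralBinom k
  _ = (2*k).choose k := Nat.centralBinom_eq_two_mul_choose k
  _ ≤ m.choose k := Nat.choose_le_choose k h

lemma aux_id1 {n k : ℕ} (hn : 1 ≤ n) (hk : 1 ≤ k) :
    k * n.choose k = n * (n-1).choose (k-1) := by
  obtain ⟨n', rfl⟩ : ∃ n', n = n' + 1 := ⟨n - 1, by omega⟩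
  obtain ⟨k', rfl⟩ : ∃ k', k = k' + 1 := ⟨k - 1, by omega⟩
  simpa [Nat.succ_sub_one, mul_comm] using (Nat.add_one_mul_choose_eq n' k').symm

lemma aux_B1 {k n : ℕ} (hk : 1 ≤ k) (hkn : 2*k ≤ n) : n * 2^(k-1) ≤ k * n.choose k := by
  rw [aux_id1 (by omega) hk]
  have : 2^(k-1) ≤ (n-1).choose (k-1) := aux_pow_le_choose (by omega)
  exact Nat.mul_le_mul_left n this

lemma aux_succ_le_two_pow (k : ℕ) : k + 1 ≤ 2^k := by
  induction k with
  | zero => simp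
  | succ k ih => have : 2^(k+1) = 2 * 2^k := by ring
                 omega

lemma aux_k_le_two_pow (k : ℕ) (hk : 1 ≤ k) : k ≤ 2^(k-1) := by
  obtain ⟨k', rfl⟩ : ∃ k', k = k' + 1 := ⟨k - 1, by omega⟩
  simpa using aux_succ_le_two_pow k'

lemma aux_choose_ge_n {k n : ℕ} (hk : 1 ≤ k) (hkn : 2*k ≤ n) : n ≤ n.choose k := by
  have h1 := aux_B1 hk hkn
  have h2 := aux_k_le_two_pow k hk
  have h3 : k * n ≤ k * n.choose k := by
    calc k * n ≤ 2^(k-1) * n := Nat.mul_le_mul_right n h2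
    _ = n * 2^(k-1) := by ring
    _ ≤ k * n.choose k := h1
  exact Nat.le_of_mul_le_mul_left h3 (by omega)

lemma aux_B2 {k n : ℕ} (hk : 2 ≤ k) (hkn : 2*k ≤ n) :
    n * (n-1) * 2^(k-2) ≤ k * (k-1) * n.choose k := by
  have e1 : k * n.choose k = n * (n-1).choose (k-1) := aux_id1 (by omega) (by omega)
  have e2 : (k-1) * (n-1).choose (k-1) = (n-1) * (n-2).choose (k-2) := by
    have := aux_id1 (n := n-1) (k := k-1) (by omega) (by omega)
    simpa [Nat.sub_sub] using this
  have e3 : 2^(k-2) ≤ (n-2).choose (k-2) := aux_pow_le_choose (by omega)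
  calc k * (k-1) * n.choose k = (k-1) * (k * n.choose k) := by ring
  _ = (k-1) * (n * (n-1).choose (k-1)) := by rw [e1]
  _ = n * ((k-1) * (n-1).choose (k-1)) := by ring
  _ = n * ((n-1) * (n-2).choose (k-2)) := by rw [e2]
  _ = n * (n-1) * (n-2).choose (k-2) := by ring
  _ ≥ n * (n-1) * 2^(k-2) := Nat.mul_le_mul_left _ e3

-- reflection of sums over Ico 1 n
lemma aux_sum_reflect (n : ℕ) (g : ℕ → ℝ) :
    ∑ j ∈ Finset.Ico 1 n, g (n - j) = ∑ j ∈ Finset.Ico 1 n, g j := by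
  apply Finset.sum_nbij' (i := fun j => n - j) (j := fun j => n - j) <;>
    intro a ha <;> simp only [Finset.mem_Ico] at * <;> omega

-- sum of inverse squares
lemma aux_sum_inv_sq (m : ℕ) : ∑ j ∈ Finset.Icc 1 m, (1:ℝ)/(j:ℝ)^2 ≤ 2 := by
  have key : ∀ m : ℕ, 1 ≤ m → ∑ j ∈ Finset.Icc 1 m, (1:ℝ)/(j:ℝ)^2 ≤ 2 - 1/m := by
    intro m hm
    induction m with
    | zero => omega
    | succ m ih =>
      rcases Nat.eq_or_lt_of_le hm with h1 | h1
      · simp [← h1]; norm_num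
      · have hm1 : 1 ≤ m := by omega
        rw [Finset.sum_Icc_succ_top (by omega : 1 ≤ m + 1)]
        have hmR : (1:ℝ) ≤ (m:ℝ) := by exact_mod_cast hm1
        have h2 : (1:ℝ)/((m:ℝ)+1)^2 ≤ 1/m - 1/(m+1) := by
          rw [div_sub_div _ _ (by positivity) (by positivity),
              div_le_div_iff₀ (by positivity) (by positivity)]
          nlinarith
        have := ih hm1
        push_cast
        push_cast at this
        linarith
  rcases Nat.eq_zero_or_pos m with rfl | hm
  · simp
  · have := key m hm
    have : (0:ℝ) < m := by exact_mod_cast hm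
    have h1m : (0:ℝ) ≤ 1/(m:ℝ) := by positivity
    linarith [key m hm]

lemma aux_sum_inv_sq_Ico (n : ℕ) : ∑ j ∈ Finset.Ico 1 n, (1:ℝ)/(j:ℝ)^2 ≤ 2 := by
  rcases Nat.eq_zero_or_pos n with rfl | hn
  · simp
  · have : Finset.Ico 1 n = Finset.Icc 1 (n-1) := by
      ext x; simp [Finset.mem_Ico, Finset.mem_Icc]; omega
    rw [this]; exact aux_sum_inv_sq (n-1)

-- convolution bound
lemma aux_conv (n : ℕ) (hn : 1 ≤ n) :
    ∑ j ∈ Finset.Ico 1 n, (1:ℝ)/((j:ℝ)^2 * ((n-j:ℕ):ℝ)^2) ≤ 8/(n:ℝ)^2 := by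
  have hnR : (1:ℝ) ≤ (n:ℝ) := by exact_mod_cast hn
  have term : ∀ j ∈ Finset.Ico 1 n,
      (1:ℝ)/((j:ℝ)^2 * ((n-j:ℕ):ℝ)^2) ≤ 2/(n:ℝ)^2 * (1/(j:ℝ)^2 + 1/((n-j:ℕ):ℝ)^2) := by
    intro j hj
    simp only [Finset.mem_Ico] at hj
    have hj1 : (1:ℝ) ≤ (j:ℝ) := by exact_mod_cast hj.1
    have hnj1 : (1:ℝ) ≤ ((n-j:ℕ):ℝ) := by
      have : 1 ≤ n - j := by omega
      exact_mod_cast this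
    have hsum : (j:ℝ) + ((n-j:ℕ):ℝ) = (n:ℝ) := by
      have : j + (n - j) = n := by omega
      exact_mod_cast congrArg (Nat.cast : ℕ → ℝ) this
    set u := (j:ℝ); set v := ((n-j:ℕ):ℝ)
    have huv : (0:ℝ) < u^2 * v^2 := by positivity
    have key : (n:ℝ)^2 ≤ 2*u^2 + 2*v^2 := by nlinarith [sq_nonneg (u - v)]
    rw [div_add_div _ _ (by positivity) (by positivity), div_mul_div_comm,
        div_le_div_iff₀ (by positivity) (by positivity)]
    nlinarith [mul_le_mul_of_nonneg_right key huv.le]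
  calc ∑ j ∈ Finset.Ico 1 n, (1:ℝ)/((j:ℝ)^2 * ((n-j:ℕ):ℝ)^2)
      ≤ ∑ j ∈ Finset.Ico 1 n, 2/(n:ℝ)^2 * (1/(j:ℝ)^2 + 1/((n-j:ℕ):ℝ)^2) :=
        Finset.sum_le_sum term
    _ = 2/(n:ℝ)^2 * (∑ j ∈ Finset.Ico 1 n, 1/(j:ℝ)^2
          + ∑ j ∈ Finset.Ico 1 n, 1/(((n-j:ℕ)):ℝ)^2) := by
        rw [← Finset.mul_sum, Finset.sum_add_distrib]
    _ = 2/(n:ℝ)^2 * (∑ j ∈ Finset.Ico 1 n, 1/(j:ℝ)^2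
          + ∑ j ∈ Finset.Ico 1 n, 1/((j:ℕ):ℝ)^2) := by
        rw [aux_sum_reflect n (fun m => 1/((m:ℕ):ℝ)^2)]
    _ ≤ 2/(n:ℝ)^2 * (2 + 2) := by
        have := aux_sum_inv_sq_Ico n
        apply mul_le_mul_of_nonneg_left _ (by positivity)
        push_cast at this ⊢
        linarith
    _ = 8/(n:ℝ)^2 := by ring

lemma Ecoef_eq (S σ' : ℝ) {n j : ℕ} (hj : j ≤ n) :
    Ecoef S σ' n j = (S * j - σ') / (n.choose j : ℝ) := by
  have h := Nat.choose_mul_factorial_mul_factorial hj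
  have hc : (0:ℝ) < (n.choose j : ℝ) := by
    exact_mod_cast Nat.choose_pos hj
  have hfR : ((n.choose j : ℝ)) * (Nat.factorial j : ℝ) * (Nat.factorial (n-j) : ℝ)
      = (Nat.factorial n : ℝ) := by exact_mod_cast congrArg (Nat.cast : ℕ → ℝ) h
  have hfn : (0:ℝ) < (Nat.factorial n : ℝ) := by exact_mod_cast Nat.factorial_pos n
  rw [Ecoef, eq_div_iff (ne_of_gt hc)]
  rw [div_mul_eq_mul_div, div_eq_iff (ne_of_gt hfn)]
  rw [← hfR]; ring

lemma Ecoef_nonneg (S σ' : ℝ) {n j : ℕ} (hS : 1 ≤ S) (hσ1 : σ' ≤ 1) (hj : 1 ≤ j) :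
    0 ≤ Ecoef S σ' n j := by
  have hj1 : (1:ℝ) ≤ (j:ℝ) := by exact_mod_cast hj
  have : (0:ℝ) ≤ S * j - σ' := by nlinarith
  unfold Ecoef; positivity

lemma choose_ge_n' {n j : ℕ} (hj : 1 ≤ j) (hjn : j < n) : n ≤ n.choose j := by
  rcases le_or_gt (2*j) n with h | h
  · exact aux_choose_ge_n hj h
  · have h1 : n.choose j = n.choose (n - j) := by
      rw [← Nat.choose_symm (le_of_lt hjn)]
    rw [h1]
    exact aux_choose_ge_n (by omega) (by omega)

lemma Ecoef_crude (S σ' : ℝ) {n j : ℕ} (hS : 1 ≤ S) (hσ2 : -1 ≤ σ') (hj : 1 ≤ j)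
    (hjn : j < n) : Ecoef S σ' n j ≤ S := by
  rw [Ecoef_eq S σ' (le_of_lt hjn)]
  have hc : (n:ℝ) ≤ (n.choose j : ℝ) := by exact_mod_cast choose_ge_n' hj hjn
  have hcpos : (0:ℝ) < (n.choose j : ℝ) := by exact_mod_cast Nat.choose_pos (le_of_lt hjn)
  rw [div_le_iff₀ hcpos]
  have hjR : (j:ℝ) ≤ (n:ℝ) - 1 := by
    have : (j:ℝ) + 1 ≤ (n:ℝ) := by exact_mod_cast hjn
    linarith
  have hn1 : (1:ℝ) ≤ (n:ℝ) := by
    have : (1:ℕ) ≤ n := by omega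
    exact_mod_cast this
  nlinarith

lemma Ecoef_mid (S σ' : ℝ) {n j : ℕ} (hS : 1 ≤ S) (hσ1 : σ' ≤ 1) (hσ2 : -1 ≤ σ') (hj : 1 ≤ j)
    (hjn : j + 2 ≤ n) :
    Ecoef S σ' n j ≤ 4 * S * ((min j (n-j) : ℕ):ℝ)^2 * (1/2:ℝ)^(min j (n-j)) / ((n:ℝ) - 1) := by
  set k := min j (n-j) with hk
  have hk1 : 1 ≤ k := by omega
  have hk2n : 2*k ≤ n := by omega
  have hkn : k ≤ n := by omega
  have hchoose : n.choose j = n.choose k := by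
    rcases le_or_gt j (n-j) with h | h
    · have : k = j := by omega
      rw [this]
    · have hkd : k = n - j := by omega
      rw [hkd, ← Nat.choose_symm (by omega : j ≤ n)]
  have hcpos : (0:ℝ) < (n.choose k : ℝ) := by exact_mod_cast Nat.choose_pos hkn
  have hn3 : 3 ≤ n := by omega
  have hn1R : (2:ℝ) ≤ (n:ℝ) := by exact_mod_cast (by omega : 2 ≤ n)
  have hnum : S * j - σ' ≤ S * n := by
    have hjR : (j:ℝ) ≤ (n:ℝ) - 1 := by
      have : (j:ℝ) + 2 ≤ (n:ℝ) := by exact_mod_cast hjn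
      linarith
    nlinarith
  have hnumpos : (0:ℝ) ≤ S * j - σ' := by
    have hj1 : (1:ℝ) ≤ (j:ℝ) := by exact_mod_cast hj
    nlinarith
  rw [Ecoef_eq S σ' (by omega), hchoose, div_le_div_iff₀ hcpos (by linarith)]
  -- goal : (S*j - σ') * ((n:ℝ)-1) ≤ 4*S*k²*(1/2)^k * choose
  have h2pos : (0:ℝ) < (2:ℝ)^(k-2) := by positivity
  rcases Nat.eq_or_lt_of_le hk1 with h1 | h1
  · -- k = 1, so j = 1
    have hkk : k = 1 := h1.symm
    have hjj : j = 1 := by omega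
    subst hjj
    rw [hkk] at *
    have hcn : (n:ℝ) ≤ (n.choose 1 : ℝ) := by
      rw [Nat.choose_one_right]
    push_cast
    rw [Nat.choose_one_right]
    nlinarith
  · -- k ≥ 2
    have hk2 : 2 ≤ k := h1
    have hB2 := aux_B2 hk2 hk2n
    have hB2R : (n:ℝ) * ((n:ℝ)-1) * (2:ℝ)^(k-2) ≤ (k:ℝ) * ((k:ℝ)-1) * (n.choose k : ℝ) := by
      have hcast : ((n * (n-1) * 2^(k-2) : ℕ) : ℝ) ≤ ((k * (k-1) * n.choose k : ℕ) : ℝ) := by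
        exact_mod_cast hB2
      push_cast [Nat.cast_sub (by omega : 1 ≤ n), Nat.cast_sub (by omega : 1 ≤ k)] at hcast
      convert hcast using 2 <;> push_cast <;> ring
    have hpowk : (2:ℝ)^(k-2) * 4 = (2:ℝ)^k := by
      rw [show (4:ℝ) = 2^2 by norm_num, ← pow_add]
      congr 1; omega
    have hhalf : (1/2:ℝ)^k * (2:ℝ)^k = 1 := by
      rw [← mul_pow]; norm_num
    have hkk2 : (k:ℝ) * ((k:ℝ)-1) ≤ (k:ℝ)^2 := by nlinarith [show (0:ℝ) ≤ (k:ℝ) from by positivity]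
    -- (S*j - σ')*(n-1)*2^k ≤ 4*S*k^2*C  then divide
    have key : (S * j - σ') * ((n:ℝ)-1) * (2:ℝ)^k ≤ 4*S*(k:ℝ)^2 * (n.choose k:ℝ) := by
      have hS0 : (0:ℝ) ≤ S := by linarith
      have hn10 : (0:ℝ) ≤ (n:ℝ) - 1 := by linarith
      have h2k0 : (0:ℝ) ≤ (2:ℝ)^k := by positivity
      calc (S * j - σ') * ((n:ℝ)-1) * (2:ℝ)^k ≤ (S*n) * ((n:ℝ)-1) * (2:ℝ)^k := by
            gcongr
      _ = 4*S*((n:ℝ) * ((n:ℝ)-1) * (2:ℝ)^(k-2)) := by rw [← hpowk]; ring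
      _ ≤ 4*S*((k:ℝ) * ((k:ℝ)-1) * (n.choose k : ℝ)) := by
            have h4S : (0:ℝ) ≤ 4*S := by linarith
            exact mul_le_mul_of_nonneg_left hB2R h4S
      _ = 4*S*((k:ℝ) * ((k:ℝ)-1)) * (n.choose k : ℝ) := by ring
      _ ≤ 4*S*(k:ℝ)^2 * (n.choose k:ℝ) := by
            have h4S : (0:ℝ) ≤ 4*S := by linarith
            have h := mul_le_mul_of_nonneg_right (mul_le_mul_of_nonneg_left hkk2 h4S) hcpos.le
            nlinarith [h]
    have h2kpos : (0:ℝ) < (2:ℝ)^k := by positivity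
    calc (S * j - σ') * ((n:ℝ)-1)
        = (S * j - σ') * ((n:ℝ)-1) * (2:ℝ)^k * (1/2:ℝ)^k := by
          rw [mul_assoc, mul_comm ((2:ℝ)^k), hhalf]; ring
      _ ≤ 4*S*(k:ℝ)^2 * (n.choose k:ℝ) * (1/2:ℝ)^k := by
          apply mul_le_mul_of_nonneg_right key (by positivity)
      _ = 4*S*(k:ℝ)^2 * (1/2:ℝ)^k * (n.choose k:ℝ) := by ring

set_option maxHeartbeats 2000000 in
lemma step_bound
    (S σ' : ℝ) (hS : 1 ≤ S) (hσ1 : σ' ≤ 1) (hσ2 : -1 ≤ σ')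
    (q a : ℕ → ℝ) (hq0 : ∀ n, 0 ≤ q n) (ha0 : ∀ n, 0 ≤ a n)
    (hrec : ∀ n, 1 ≤ n → a n = q n + ∑ j ∈ Finset.Ico 1 n, Ecoef S σ' n j * a j * a (n - j))
    (t : ℝ) (ht : 0 < t) (hq1 : S * a 1 * t < 1)
    (K : ℝ) (hK : ∀ n, 1 ≤ n → q n * t^n ≤ K)
    (CW : ℝ) (hCW : ∀ F : Finset ℕ, ∑ k ∈ F, (k:ℝ)^2 * a k * (t/2)^k ≤ CW) :
    ∃ M : ℝ, ∀ n, 1 ≤ n → a n * t^n ≤ M := by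
  set b : ℕ → ℝ := fun m => a m * t^m with hb
  have hb0 : ∀ m, 0 ≤ b m := fun m => mul_nonneg (ha0 m) (by positivity)
  set qq : ℝ := S * a 1 * t with hqq
  have hqq0 : 0 ≤ qq := by
    have := ha0 1
    have : 0 ≤ S * a 1 := mul_nonneg (by linarith) this
    nlinarith
  set δ : ℝ := (1 - qq)/2 with hδ
  have hδ0 : 0 < δ := by simp only [hδ]; linarith
  have hK0 : 0 ≤ K := le_trans (mul_nonneg (hq0 1) (by positivity)) (hK 1 le_rfl)
  have hCW0 : 0 ≤ CW := by simpa using hCW ∅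
  obtain ⟨N, hN⟩ := exists_nat_gt (8*S*CW/δ)
  set N' : ℕ := N + 2 with hN'
  set M : ℝ := K/δ + ∑ m ∈ Finset.range N', b m with hM
  have hsum0 : 0 ≤ ∑ m ∈ Finset.range N', b m := Finset.sum_nonneg fun m _ => hb0 m
  have hM0 : 0 ≤ M := by positivity
  have hKM : K ≤ δ * M := by
    have h1 : K/δ ≤ M := by simp only [hM]; linarith
    calc K = δ * (K/δ) := by field_simp
    _ ≤ δ * M := by nlinarith
  refine ⟨M, ?_⟩
  intro n
  induction n using Nat.strong_induction_on with
  | _ n IH =>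
  intro hn1
  rcases lt_or_ge n N' with hsmall | hbig
  · -- small case: b n is one of the summands
    have : b n ≤ ∑ m ∈ Finset.range N', b m :=
      Finset.single_le_sum (fun m _ => hb0 m) (Finset.mem_range.mpr hsmall)
    have hKδ : 0 ≤ K/δ := by positivity
    simp only [hM]; simp only [hb] at this ⊢; linarith
  · -- large case
    have hn2 : 2 ≤ n := by omega
    -- b-form recursion
    have hbrec : b n = q n * t^n + ∑ j ∈ Finset.Ico 1 n, Ecoef S σ' n j * b j * b (n - j) := by
      have h := hrec n hn1
      have : b n = (q n + ∑ j ∈ Finset.Ico 1 n, Ecoef S σ' n j * a j * a (n - j)) * t^n := by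
        rw [hb]; simp only; rw [← h]
      rw [this, add_mul, Finset.sum_mul]
      congr 1
      apply Finset.sum_congr rfl
      intro j hj
      simp only [Finset.mem_Ico] at hj
      have hjn : j + (n - j) = n := by omega
      have : t^n = t^j * t^(n-j) := by rw [← pow_add, hjn]
      rw [this]; simp only [hb]; ring
    -- split off the top term j = n-1
    have hsplit : ∑ j ∈ Finset.Ico 1 n, Ecoef S σ' n j * b j * b (n - j)
        = (∑ j ∈ Finset.Ico 1 (n-1), Ecoef S σ' n j * b j * b (n - j))
          + Ecoef S σ' n (n-1) * b (n-1) * b (n - (n-1)) := by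
      have hrw : n = (n-1) + 1 := by omega
      rw [hrw, Finset.sum_Ico_succ_top (by omega : 1 ≤ n - 1)]
      simp only [← hrw]
    -- edge term bound
    have hedge : Ecoef S σ' n (n-1) * b (n-1) * b (n - (n-1)) ≤ qq * M := by
      have h1 : n - (n-1) = 1 := by omega
      rw [h1]
      have hE : Ecoef S σ' n (n-1) ≤ S := Ecoef_crude S σ' hS hσ2 (by omega) (by omega)
      have hE0 : 0 ≤ Ecoef S σ' n (n-1) := Ecoef_nonneg S σ' hS hσ1 (by omega)
      have hIH : b (n-1) ≤ M := IH (n-1) (by omega) (by omega)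
      have hb1 : b 1 = a 1 * t := by simp [hb]
      calc Ecoef S σ' n (n-1) * b (n-1) * b 1 ≤ S * b (n-1) * b 1 := by
            have := hb0 (n-1); have := hb0 1
            apply mul_le_mul_of_nonneg_right _ (hb0 1)
            exact mul_le_mul_of_nonneg_right hE (hb0 (n-1))
      _ = (S * a 1 * t) * b (n-1) := by rw [hb1]; ring
      _ ≤ qq * M := by
            rw [← hqq]
            exact mul_le_mul_of_nonneg_left hIH hqq0
    -- middle terms
    have hmid : (∑ j ∈ Finset.Ico 1 (n-1), Ecoef S σ' n j * b j * b (n - j)) ≤ δ * M := by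
      set g : ℕ → ℝ := fun k => (k:ℝ)^2 * a k * (t/2)^k with hg
      have hg0 : ∀ k, 0 ≤ g k := fun k => by
        have := ha0 k; simp only [hg]; positivity
      have term_le : ∀ j ∈ Finset.Ico 1 (n-1),
          Ecoef S σ' n j * b j * b (n - j) ≤ (4*S*M/((n:ℝ)-1)) * (g j + g (n - j)) := by
        intro j hj
        simp only [Finset.mem_Ico] at hj
        set k := min j (n - j) with hk
        have hk1 : 1 ≤ k := by omega
        have hkn : k ≤ n := by omega
        have hE : Ecoef S σ' n j ≤ 4 * S * (k:ℝ)^2 * (1/2:ℝ)^k / ((n:ℝ) - 1) :=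
          Ecoef_mid S σ' hS hσ1 hσ2 hj.1 (by omega)
        have hE0 : 0 ≤ Ecoef S σ' n j := Ecoef_nonneg S σ' hS hσ1 hj.1
        have hprod : b j * b (n - j) = b k * b (n - k) := by
          rcases le_or_gt j (n - j) with h | h
          · have : k = j := by omega
            rw [this]
          · have hkd : k = n - j := by omega
            rw [hkd]
            have hnk : n - (n - j) = j := by omega
            rw [hnk, mul_comm]
        have hIH2 : b (n - k) ≤ M := IH (n-k) (by omega) (by omega)
        have hgk : ((k:ℝ)^2 * (1/2:ℝ)^k) * b k = g k := by
          simp only [hg, hb, div_pow, one_pow]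
          ring
        have hn1R : (0:ℝ) < (n:ℝ) - 1 := by
          have : (2:ℝ) ≤ (n:ℝ) := by exact_mod_cast hn2
          linarith
        calc Ecoef S σ' n j * b j * b (n - j)
            ≤ (4 * S * (k:ℝ)^2 * (1/2:ℝ)^k / ((n:ℝ) - 1)) * (b j * b (n-j)) := by
              rw [mul_assoc]
              apply mul_le_mul_of_nonneg_right hE
              exact mul_nonneg (hb0 j) (hb0 (n-j))
          _ = (4 * S * (k:ℝ)^2 * (1/2:ℝ)^k / ((n:ℝ) - 1)) * (b k * b (n-k)) := by rw [hprod]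
          _ ≤ (4 * S * (k:ℝ)^2 * (1/2:ℝ)^k / ((n:ℝ) - 1)) * (b k * M) := by
              apply mul_le_mul_of_nonneg_left _ (by positivity)
              exact mul_le_mul_of_nonneg_left hIH2 (hb0 k)
          _ = (4*S*M/((n:ℝ)-1)) * (((k:ℝ)^2 * (1/2:ℝ)^k) * b k) := by ring
          _ = (4*S*M/((n:ℝ)-1)) * g k := by rw [hgk]
          _ ≤ (4*S*M/((n:ℝ)-1)) * (g j + g (n - j)) := by
              apply mul_le_mul_of_nonneg_left _ (by positivity)
              rcases le_or_gt j (n - j) with h | h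
              · have : k = j := by omega
                rw [this]; linarith [hg0 (n-j)]
              · have : k = n - j := by omega
                rw [this]; linarith [hg0 j]
      have hn1R : (0:ℝ) < (n:ℝ) - 1 := by
        have : (2:ℝ) ≤ (n:ℝ) := by exact_mod_cast hn2
        linarith
      have hsum_le : ∑ j ∈ Finset.Ico 1 (n-1), (g j + g (n - j)) ≤ 2 * CW := by
        rw [Finset.sum_add_distrib]
        have h1 : ∑ j ∈ Finset.Ico 1 (n-1), g j ≤ CW := hCW _
        have h2 : ∑ j ∈ Finset.Ico 1 (n-1), g (n - j) ≤ CW := by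
          have hsub : Finset.Ico 1 (n-1) ⊆ Finset.Ico 1 n := by
            apply Finset.Ico_subset_Ico le_rfl; omega
          have : ∑ j ∈ Finset.Ico 1 (n-1), g (n - j) ≤ ∑ j ∈ Finset.Ico 1 n, g (n - j) :=
            Finset.sum_le_sum_of_subset_of_nonneg hsub (fun m _ _ => hg0 (n - m))
          rw [aux_sum_reflect n g] at this
          exact le_trans this (hCW _)
        linarith
      calc ∑ j ∈ Finset.Ico 1 (n-1), Ecoef S σ' n j * b j * b (n - j)
          ≤ ∑ j ∈ Finset.Ico 1 (n-1), (4*S*M/((n:ℝ)-1)) * (g j + g (n - j)) :=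
            Finset.sum_le_sum term_le
        _ = (4*S*M/((n:ℝ)-1)) * ∑ j ∈ Finset.Ico 1 (n-1), (g j + g (n - j)) := by
            rw [Finset.mul_sum]
        _ ≤ (4*S*M/((n:ℝ)-1)) * (2*CW) := by
            apply mul_le_mul_of_nonneg_left hsum_le (by positivity)
        _ = (8*S*CW) * M / ((n:ℝ)-1) := by ring
        _ ≤ δ * M := by
            rw [div_le_iff₀ hn1R]
            have hNn : (N:ℝ) ≤ (n:ℝ) - 1 := by
              have : N + 1 ≤ n := by omega
              have : ((N:ℕ):ℝ) + 1 ≤ (n:ℝ) := by exact_mod_cast this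
              linarith
            have h8 : 8*S*CW ≤ δ * ((n:ℝ)-1) := by
              have : 8*S*CW/δ < (n:ℝ) - 1 := by linarith
              rw [div_lt_iff₀ hδ0] at this
              nlinarith
            nlinarith [hM0, hδ0, mul_le_mul_of_nonneg_right h8 hM0]
    -- combine
    have hq' : q n * t^n ≤ K := hK n hn1
    have : b n ≤ K + δ * M + qq * M := by
      rw [hbrec, hsplit]
      linarith
    have : b n ≤ δ*M + δ*M + qq*M := by linarith
    have hfin : δ*M + δ*M + qq*M = M := by
      simp only [hδ]; ring
    simp only [hb] at this ⊢
    linarith [this, hfin.le]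

lemma radius_summable {c : ℕ → ℝ} {x : ℝ≥0} (h : (x:ℝ≥0∞) < seriesRadius c) :
    Summable (fun n => |c n| * (x:ℝ)^n) := by
  rw [seriesRadius, lt_iSup_iff] at h
  obtain ⟨r, hr⟩ := h
  rw [lt_iSup_iff] at hr
  obtain ⟨hsum, hlt⟩ := hr
  have hxr : (x:ℝ) ≤ (r:ℝ) := by exact_mod_cast hlt.le
  apply Summable.of_nonneg_of_le (fun n => by positivity) _ hsum
  intro n
  apply mul_le_mul_of_nonneg_left _ (abs_nonneg _)
  exact pow_le_pow_left₀ x.coe_nonneg hxr n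

lemma le_seriesRadius {c : ℕ → ℝ} {x : ℝ≥0} (h : Summable fun n => |c n| * (x:ℝ)^n) :
    (x:ℝ≥0∞) ≤ seriesRadius c := by
  rw [seriesRadius]
  exact le_iSup₂ (f := fun (r : ℝ≥0) (_ : Summable fun n => |c n| * (r:ℝ)^n) => (r:ℝ≥0∞)) x h

lemma nat_sq_le_two_pow (n : ℕ) : n^2 ≤ 2*2^n := by
  induction n with
  | zero => simp
  | succ n ih =>
    have h1 := aux_succ_le_two_pow n
    have h2 : 2^(n+1) = 2*2^n := by ring
    nlinarith

set_option maxHeartbeats 1000000 in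
lemma crude_bound
    (S σ' : ℝ) (hS : 1 ≤ S) (hσ1 : σ' ≤ 1) (hσ2 : -1 ≤ σ')
    (q a : ℕ → ℝ) (hq0 : ∀ n, 0 ≤ q n) (ha0 : ∀ n, 0 ≤ a n)
    (hrec : ∀ n, 1 ≤ n → a n = q n + ∑ j ∈ Finset.Ico 1 n, Ecoef S σ' n j * a j * a (n - j))
    (x₀ : ℝ) (hx₀ : 0 < x₀) (c : ℝ) (hc : ∀ n, 1 ≤ n → q n * x₀^n ≤ c) :
    ∃ β : ℝ, 0 < β ∧ ∀ n, 1 ≤ n → a n ≤ (1/(32*S)) * β^n / (n:ℝ)^2 := by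
  have hc0 : 0 ≤ c := le_trans (mul_nonneg (hq0 1) (by positivity)) (hc 1 le_rfl)
  have hS0 : (0:ℝ) < S := by linarith
  set B : ℝ := 1/(32*S) with hB
  have hB0 : 0 < B := by positivity
  have hB32 : 32 * S * B = 1 := by rw [hB]; field_simp
  set G : ℝ := 2 + 256*S*c with hG
  have hG2 : 2 ≤ G := by nlinarith
  set β : ℝ := G / x₀ with hβ
  have hβ0 : 0 < β := by positivity
  have hβx : β * x₀ = G := by rw [hβ]; field_simp
  refine ⟨β, hβ0, ?_⟩
  -- bound on q n
  have hq_bd : ∀ n : ℕ, 1 ≤ n → q n ≤ B * β^n / (2*(n:ℝ)^2) := by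
    intro n hn
    have hn0 : (0:ℝ) < (n:ℝ) := by exact_mod_cast hn
    have hx0n : (0:ℝ) < x₀^n := by positivity
    have h1 : q n ≤ c / x₀^n := by
      rw [le_div_iff₀ hx0n]; exact hc n hn
    have h2 : c / x₀^n ≤ B * β^n / (2*(n:ℝ)^2) := by
      rw [div_le_div_iff₀ hx0n (by positivity)]
      -- c * (2n²) ≤ B β^n x₀^n
      have hn2 : (n:ℝ)^2 ≤ 2*2^n := by
        have := nat_sq_le_two_pow n
        exact_mod_cast this
      have hGn : (β^n) * x₀^n = G^n := by rw [← mul_pow, hβx]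
      have hG2n : (2:ℝ)^n * (G/2) ≤ G^n := by
        have : G^n = 2^n * (G/2)^n := by
          rw [← mul_pow]; congr 1; field_simp
        rw [this]
        apply mul_le_mul_of_nonneg_left _ (by positivity)
        have hG21 : (1:ℝ) ≤ G/2 := by linarith
        calc G/2 = (G/2)^1 := (pow_one _).symm
        _ ≤ (G/2)^n := pow_le_pow_right₀ hG21 hn
      have key : 4*c*(2:ℝ)^n ≤ B * G^n := by
        have h3 : B * ((2:ℝ)^n * (G/2)) ≤ B * G^n := mul_le_mul_of_nonneg_left hG2n hB0.le
        have h5 : B * G = 2*B + 8*c := by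
          rw [hG]; linear_combination (8*c)*hB32
        have h4 : B * ((2:ℝ)^n * (G/2)) = 2^n * (B + 4*c) := by
          linear_combination ((2:ℝ)^n/2)*h5
        nlinarith [pow_pos (show (0:ℝ) < 2 by norm_num) n]
      calc c * (2*(n:ℝ)^2) ≤ c * (2*(2*2^n)) := by nlinarith [pow_pos (show (0:ℝ) < 2 by norm_num) n]
      _ = 4*c*2^n := by ring
      _ ≤ B * G^n := key
      _ = B * β^n * x₀^n := by rw [← hGn]; ring
    linarith
  -- main induction
  intro n
  induction n using Nat.strong_induction_on with
  | _ n IH =>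
  intro hn1
  have hn0 : (0:ℝ) < (n:ℝ) := by exact_mod_cast hn1
  have hmid : ∑ j ∈ Finset.Ico 1 n, Ecoef S σ' n j * a j * a (n - j)
      ≤ 8*S*B^2*β^n/(n:ℝ)^2 := by
    have term_le : ∀ j ∈ Finset.Ico 1 n, Ecoef S σ' n j * a j * a (n - j)
        ≤ (S*B^2*β^n) * (1/((j:ℝ)^2 * ((n-j:ℕ):ℝ)^2)) := by
      intro j hj
      simp only [Finset.mem_Ico] at hj
      have hj0 : (0:ℝ) < (j:ℝ) := by exact_mod_cast hj.1
      have hnj : 1 ≤ n - j := by omega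
      have hnj0 : (0:ℝ) < ((n-j:ℕ):ℝ) := by exact_mod_cast hnj
      have hE : Ecoef S σ' n j ≤ S := Ecoef_crude S σ' hS hσ2 hj.1 hj.2
      have hE0 : 0 ≤ Ecoef S σ' n j := by
        have hj1 : (1:ℝ) ≤ (j:ℝ) := by exact_mod_cast hj.1
        have : (0:ℝ) ≤ S * j - σ' := by nlinarith
        unfold Ecoef; positivity
      have hIH1 : a j ≤ B * β^j / (j:ℝ)^2 := IH j hj.2 hj.1
      have hIH2 : a (n-j) ≤ B * β^(n-j) / ((n-j:ℕ):ℝ)^2 := IH (n-j) (by omega) hnj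
      have hpow : β^j * β^(n-j) = β^n := by
        rw [← pow_add]; congr 1; omega
      calc Ecoef S σ' n j * a j * a (n - j) ≤ S * a j * a (n-j) := by
            apply mul_le_mul_of_nonneg_right _ (ha0 (n-j))
            exact mul_le_mul_of_nonneg_right hE (ha0 j)
      _ ≤ S * (B * β^j / (j:ℝ)^2) * (B * β^(n-j) / ((n-j:ℕ):ℝ)^2) := by
            apply mul_le_mul
            · exact mul_le_mul_of_nonneg_left hIH1 hS0.le
            · exact hIH2
            · exact ha0 (n-j)
            · positivity
      _ = (S*B^2*(β^j * β^(n-j))) * (1/((j:ℝ)^2 * ((n-j:ℕ):ℝ)^2)) := by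
            field_simp
      _ = (S*B^2*β^n) * (1/((j:ℝ)^2 * ((n-j:ℕ):ℝ)^2)) := by rw [hpow]
    calc ∑ j ∈ Finset.Ico 1 n, Ecoef S σ' n j * a j * a (n - j)
        ≤ ∑ j ∈ Finset.Ico 1 n, (S*B^2*β^n) * (1/((j:ℝ)^2 * ((n-j:ℕ):ℝ)^2)) :=
          Finset.sum_le_sum term_le
      _ = (S*B^2*β^n) * ∑ j ∈ Finset.Ico 1 n, (1:ℝ)/((j:ℝ)^2 * ((n-j:ℕ):ℝ)^2) := by
          rw [Finset.mul_sum]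
      _ ≤ (S*B^2*β^n) * (8/(n:ℝ)^2) := by
          apply mul_le_mul_of_nonneg_left (aux_conv n hn1) (by positivity)
      _ = 8*S*B^2*β^n/(n:ℝ)^2 := by ring
  have hqn : q n ≤ B * β^n / (2*(n:ℝ)^2) := hq_bd n hn1
  have hrecn := hrec n hn1
  have hBB : 8*S*B^2 = B/4 := by
    rw [hB]; field_simp; ring
  rw [hrecn]
  calc q n + ∑ j ∈ Finset.Ico 1 n, Ecoef S σ' n j * a j * a (n - j)
      ≤ B * β^n / (2*(n:ℝ)^2) + 8*S*B^2*β^n/(n:ℝ)^2 := by linarith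
    _ = B * β^n / (2*(n:ℝ)^2) + (B/4)*β^n/(n:ℝ)^2 := by rw [hBB]
    _ = (3/4)*(B*β^n/(n:ℝ)^2) := by
        field_simp; ring
    _ ≤ B*β^n/(n:ℝ)^2 := by
        have h0 : 0 ≤ B*β^n/(n:ℝ)^2 := by positivity
        linarith

set_option maxHeartbeats 1000000 in
/-- `ρ_a ≥ min{ρ, 1/(|s|·a_1)}` (with the convention `1/(|s|·a_1) = ∞` if `a_1 = 0`). -/
theorem radius_lower_bound
    (s : ℤ) (hs : s ≠ 0)
    (p : ℕ → ℝ) (hp : ∀ k, 1 ≤ k → 0 ≤ p k)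
    (ρ : ℝ≥0∞)
    (hρ : ρ = seriesRadius fun k => if k = 0 then 0 else p k / (Nat.factorial k))
    (hρ0 : 0 < ρ)
    (hf : ∃ k, 1 ≤ k ∧ p k ≠ 0)
    (γ : ℕ → ℝ)
    (hγ : ∀ n, 1 ≤ n → γ n = p n +
      ∑ j ∈ Finset.Ico 1 n, ((|s| : ℝ) * j - (s.sign : ℝ)) * γ j * γ (n - j))
    (a : ℕ → ℝ) (ha : ∀ n, a n = if n = 0 then 0 else γ n / (Nat.factorial n))
    (ρa : ℝ≥0∞) (hρa : ρa = seriesRadius a) :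
    min ρ (ENNReal.ofReal ((|s| : ℝ) * a 1))⁻¹ ≤ ρa := by
  set S : ℝ := |(s:ℝ)| with hSdef
  set σ' : ℝ := ((s.sign : ℤ) : ℝ) with hσdef
  have hS : 1 ≤ S := by
    have h1 : (1:ℤ) ≤ |s| := Int.one_le_abs hs
    have h2 : ((1:ℤ):ℝ) ≤ ((|s|:ℤ):ℝ) := by exact_mod_cast h1
    rwa [Int.cast_abs, Int.cast_one] at h2
  have hsig : s.sign = 1 ∨ s.sign = -1 := by
    rcases s with n | n
    · cases n with
      | zero => exact absurd rfl hs
      | succ m => left; rfl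
    · right; rfl
  have hσ1 : σ' ≤ 1 := by rcases hsig with h | h <;> simp [hσdef, h]
  have hσ2 : -1 ≤ σ' := by rcases hsig with h | h <;> simp [hσdef, h]
  set q : ℕ → ℝ := fun k => if k = 0 then 0 else p k / (Nat.factorial k) with hqdef
  have hq0 : ∀ n, 0 ≤ q n := by
    intro n
    simp only [hqdef]
    split
    · exact le_refl 0
    · rename_i hn
      have hn1 : 1 ≤ n := by omega
      have := hp n hn1
      positivity
  -- nonnegativity of γ
  have hγ0 : ∀ n, 1 ≤ n → 0 ≤ γ n := by
    intro n
    induction n using Nat.strong_induction_on with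
    | _ n IH =>
    intro hn1
    rw [hγ n hn1]
    have hsums : 0 ≤ ∑ j ∈ Finset.Ico 1 n, (S * j - σ') * γ j * γ (n - j) := by
      apply Finset.sum_nonneg
      intro j hj
      simp only [Finset.mem_Ico] at hj
      have hj1 : (1:ℝ) ≤ (j:ℝ) := by exact_mod_cast hj.1
      have hc : 0 ≤ S * j - σ' := by nlinarith
      have h1 : 0 ≤ γ j := IH j hj.2 hj.1
      have h2 : 0 ≤ γ (n - j) := IH (n-j) (by omega) (by omega)
      positivity
    have := hp n hn1
    linarith
  have ha0 : ∀ n, 0 ≤ a n := by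
    intro n
    rw [ha n]
    split
    · exact le_refl 0
    · rename_i hn
      have := hγ0 n (by omega)
      positivity
  have ha00 : a 0 = 0 := by rw [ha 0]; simp
  -- recursion in a-form
  have hrecA : ∀ n, 1 ≤ n → a n = q n + ∑ j ∈ Finset.Ico 1 n,
      Ecoef S σ' n j * a j * a (n - j) := by
    intro n hn1
    have hn0 : n ≠ 0 := by omega
    have hfn : ((Nat.factorial n : ℕ) : ℝ) ≠ 0 := by
      exact_mod_cast (Nat.factorial_pos n).ne'
    have hγa : ∀ m, 1 ≤ m → γ m = a m * (Nat.factorial m) := by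
      intro m hm
      rw [ha m, if_neg (by omega : ¬ m = 0)]
      field_simp
    rw [ha n, if_neg hn0, hγ n hn1]
    rw [add_div, Finset.sum_div]
    congr 1
    · simp only [hqdef, if_neg hn0]
    · apply Finset.sum_congr rfl
      intro j hj
      simp only [Finset.mem_Ico] at hj
      rw [hγa j hj.1, hγa (n-j) (by omega)]
      have hfj : ((Nat.factorial j : ℕ) : ℝ) ≠ 0 := by
        exact_mod_cast (Nat.factorial_pos j).ne'
      have hfnj : ((Nat.factorial (n-j) : ℕ) : ℝ) ≠ 0 := by
        exact_mod_cast (Nat.factorial_pos (n-j)).ne'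
      rw [Ecoef]
      field_simp
  -- summability of q below ρ
  have hqsum : ∀ x : ℝ, 0 ≤ x → ENNReal.ofReal x < ρ → Summable (fun n => q n * x^n) := by
    intro x hx hxρ
    have hcoe : ((x.toNNReal : ℝ≥0) : ℝ≥0∞) = ENNReal.ofReal x := rfl
    have : ((x.toNNReal : ℝ≥0) : ℝ≥0∞) < seriesRadius q := by rw [hcoe, ← hρ]; exact hxρ
    have hsum := radius_summable this
    have hx' : ((x.toNNReal : ℝ≥0) : ℝ) = x := Real.coe_toNNReal x hx
    rw [hx'] at hsum
    have heq : (fun n => |q n| * x^n) = fun n => q n * x^n := by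
      funext n; rw [abs_of_nonneg (hq0 n)]
    rwa [heq] at hsum
  -- the crude bound
  obtain ⟨r', hr'0, hr'ρ⟩ := ENNReal.lt_iff_exists_nnreal_btwn.mp hρ0
  set x₀ : ℝ := (r' : ℝ) with hx₀def
  have hx₀ : 0 < x₀ := by exact_mod_cast hr'0
  have hqsum₀ : Summable (fun n => q n * x₀^n) := by
    apply hqsum x₀ hx₀.le
    rw [hx₀def, ENNReal.ofReal_coe_nnreal]
    exact hr'ρ
  set c : ℝ := ∑' n, q n * x₀^n with hcdef
  have hc : ∀ n, 1 ≤ n → q n * x₀^n ≤ c := by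
    intro n _
    exact Summable.le_tsum hqsum₀ n (fun m _ => mul_nonneg (hq0 m) (by positivity))
  obtain ⟨β, hβ0, hβ⟩ := crude_bound S σ' hS hσ1 hσ2 q a hq0 ha0 hrecA x₀ hx₀ c hc
  set r₀ : ℝ := 1/(2*β) with hr₀def
  have hr₀ : 0 < r₀ := by positivity
  -- base summability
  have hbase : ∀ x : ℝ, 0 ≤ x → x < r₀ → Summable (fun n => a n * x^n) := by
    intro x hx hxr
    have hβx : β * x < 1/2 := by
      rw [hr₀def] at hxr
      calc β * x < β * (1/(2*β)) := by
            apply mul_lt_mul_of_pos_left hxr hβ0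
      _ = 1/2 := by field_simp
    have hβx0 : 0 ≤ β * x := by positivity
    apply Summable.of_nonneg_of_le
      (fun n => mul_nonneg (ha0 n) (by positivity))
      (fun n => ?_) (Summable.mul_left (1/(32*S)) (summable_geometric_of_lt_one hβx0 (by linarith)))
    rcases Nat.eq_zero_or_pos n with rfl | hn1
    · simp [ha00]
      positivity
    · have h1 := hβ n hn1
      have hn0 : (1:ℝ) ≤ (n:ℝ) := by exact_mod_cast hn1
      have hx_n : (0:ℝ) ≤ x^n := by positivity
      calc a n * x^n ≤ ((1/(32*S)) * β^n / (n:ℝ)^2) * x^n := by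
            exact mul_le_mul_of_nonneg_right h1 hx_n
      _ ≤ (1/(32*S)) * β^n * x^n := by
            rw [div_mul_eq_mul_div, div_le_iff₀ (by positivity)]
            have hfac : (0:ℝ) ≤ (1/(32*S)) * β^n * x^n := by positivity
            nlinarith [hfac, sq_nonneg ((n:ℝ) - 1)]
      _ = (1/(32*S)) * (β*x)^n := by rw [mul_pow]; ring
  -- iteration
  have main : ∀ k : ℕ, ∀ x : ℝ, 0 ≤ x → ENNReal.ofReal x < ρ → S * a 1 * x < 1 →
      x < 2^k * r₀ → Summable (fun n => a n * x^n) := by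
    intro k
    induction k with
    | zero =>
      intro x hx hxρ hxq hxr
      exact hbase x hx (by simpa using hxr)
    | succ k IH =>
      intro x hx hxρ hxq hxr
      -- choose t ∈ (x, bounds)
      obtain ⟨x₁, hx₁l, hx₁r⟩ := ENNReal.lt_iff_exists_nnreal_btwn.mp hxρ
      have hxx₁ : x < (x₁:ℝ) := by
        rw [← ENNReal.ofReal_coe_nnreal] at hx₁l
        exact (ENNReal.ofReal_lt_ofReal_iff_of_nonneg hx).mp hx₁l
      set u : ℝ := S * a 1 with hudef
      have hu0 : 0 ≤ u := mul_nonneg (by linarith) (ha0 1)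
      set x₂ : ℝ := x + (1 - u*x)/(u+1) with hx₂def
      have hxx₂ : x < x₂ := by
        have : 0 < (1 - u*x)/(u+1) := by
          apply div_pos _ (by linarith)
          linarith [hxq]
        rw [hx₂def]; linarith
      have hx₂q : u * x₂ < 1 := by
        have hu1 : (0:ℝ) < u + 1 := by linarith
        have he : u * x₂ = (u*x*(u+1) + u*(1 - u*x))/(u+1) := by
          rw [hx₂def]; field_simp
        rw [he, div_lt_one hu1]
        have hux : u*x < 1 := hxq
        nlinarith
      set x₃ : ℝ := (x + 2^(k+1)*r₀)/2 with hx₃def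
      have hxx₃ : x < x₃ := by rw [hx₃def]; linarith
      have hx₃r : x₃ < 2^(k+1)*r₀ := by rw [hx₃def]; linarith
      set t : ℝ := min (x₁:ℝ) (min x₂ x₃) with htdef
      have hxt : x < t := by
        rw [htdef]
        exact lt_min hxx₁ (lt_min hxx₂ hxx₃)
      have ht0 : 0 < t := lt_of_le_of_lt hx hxt
      have htρ : ENNReal.ofReal t < ρ := by
        have h1 : t ≤ (x₁:ℝ) := by rw [htdef]; exact min_le_left _ _
        calc ENNReal.ofReal t ≤ ENNReal.ofReal (x₁:ℝ) := ENNReal.ofReal_le_ofReal h1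
        _ = (x₁ : ℝ≥0∞) := ENNReal.ofReal_coe_nnreal
        _ < ρ := hx₁r
      have htq : S * a 1 * t < 1 := by
        have h1 : t ≤ x₂ := le_trans (min_le_right _ _) (min_le_left _ _)
        calc S * a 1 * t = u * t := by rw [hudef]
        _ ≤ u * x₂ := mul_le_mul_of_nonneg_left h1 hu0
        _ < 1 := hx₂q
      have htr : t < 2^(k+1)*r₀ := by
        have h1 : t ≤ x₃ := le_trans (min_le_right _ _) (min_le_right _ _)
        linarith
      -- K
      have hqsum_t : Summable (fun n => q n * t^n) := hqsum t ht0.le htρ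
      set K : ℝ := ∑' n, q n * t^n with hKdef
      have hK : ∀ n, 1 ≤ n → q n * t^n ≤ K := by
        intro n _
        exact Summable.le_tsum hqsum_t n (fun m _ => mul_nonneg (hq0 m) (by positivity))
      -- CW via IH at y > t/2
      set y : ℝ := min ((t/2 + t)/2) ((t/2 + 2^k*r₀)/2) with hydef
      have hty : t/2 < y := by
        apply lt_min
        · linarith
        · have : t/2 < 2^k*r₀ := by
            have h2 : (2:ℝ)^(k+1) = 2*2^k := by ring
            rw [h2] at htr
            linarith
          linarith
      have hyt : y < t := by
        calc y ≤ (t/2 + t)/2 := min_le_left _ _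
        _ < t := by linarith
      have hy0 : 0 < y := by linarith
      have hyr : y < 2^k*r₀ := by
        have h2 : (2:ℝ)^(k+1) = 2*2^k := by ring
        rw [h2] at htr
        calc y ≤ (t/2 + 2^k*r₀)/2 := min_le_right _ _
        _ < 2^k*r₀ := by linarith
      have hyρ : ENNReal.ofReal y < ρ := lt_of_le_of_lt (ENNReal.ofReal_le_ofReal hyt.le) htρ
      have hyq : S * a 1 * y < 1 := by
        have : S * a 1 * y ≤ S * a 1 * t := mul_le_mul_of_nonneg_left hyt.le hu0
        linarith
      have hysum : Summable (fun n => a n * y^n) := IH y hy0.le hyρ hyq hyr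
      -- summability of g
      set θ : ℝ := (t/2)/y with hθdef
      have hθ0 : 0 ≤ θ := by positivity
      have hθ1 : θ < 1 := by
        rw [hθdef, div_lt_one hy0]; exact hty
      have hθsum : Summable (fun m : ℕ => (m:ℝ)^2 * θ^m) := by
        have := summable_pow_mul_geometric_of_norm_lt_one 2 (r := θ) (by rwa [Real.norm_eq_abs, abs_of_nonneg hθ0])
        simpa using this
      set D : ℝ := ∑' m : ℕ, (m:ℝ)^2 * θ^m with hDdef
      have hD : ∀ m : ℕ, (m:ℝ)^2 * θ^m ≤ D := by
        intro m
        exact Summable.le_tsum hθsum m (fun i _ => by positivity)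
      have hgnn : ∀ m : ℕ, 0 ≤ (m:ℝ)^2 * a m * (t/2)^m := by
        intro m
        have := ha0 m
        positivity
      have hgsum : Summable (fun m : ℕ => (m:ℝ)^2 * a m * (t/2)^m) := by
        apply Summable.of_nonneg_of_le hgnn (fun m => ?_) (hysum.mul_left D)
        have ht2 : t/2 = θ * y := by
          rw [hθdef]
          exact (div_mul_cancel₀ _ (ne_of_gt hy0)).symm
        calc (m:ℝ)^2 * a m * (t/2)^m = (a m * y^m) * ((m:ℝ)^2 * θ^m) := by
              rw [ht2, mul_pow]; ring
        _ ≤ (a m * y^m) * D := by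
              apply mul_le_mul_of_nonneg_left (hD m)
              exact mul_nonneg (ha0 m) (by positivity)
        _ = D * (a m * y^m) := by ring
      set CW : ℝ := ∑' m : ℕ, (m:ℝ)^2 * a m * (t/2)^m with hCWdef
      have hCW : ∀ F : Finset ℕ, ∑ m ∈ F, (m:ℝ)^2 * a m * (t/2)^m ≤ CW := by
        intro F
        exact Summable.sum_le_tsum F (fun m _ => hgnn m) hgsum
      -- apply step_bound
      obtain ⟨M, hM⟩ := step_bound S σ' hS hσ1 hσ2 q a hq0 ha0 hrecA t ht0 htq K hK CW hCW
      have hM0 : 0 ≤ M := le_trans (mul_nonneg (ha0 1) (by positivity)) (hM 1 le_rfl)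
      -- conclude summability at x
      have hxt1 : x/t < 1 := by rw [div_lt_one ht0]; exact hxt
      have hxt0 : 0 ≤ x/t := by positivity
      apply Summable.of_nonneg_of_le
        (fun n => mul_nonneg (ha0 n) (by positivity))
        (fun n => ?_) (Summable.mul_left M (summable_geometric_of_lt_one hxt0 hxt1))
      rcases Nat.eq_zero_or_pos n with rfl | hn1
      · simp [ha00]
        positivity
      · have h1 := hM n hn1
        have hxn : (x/t)^n * t^n = x^n := by
          rw [← mul_pow, div_mul_cancel₀ x ht0.ne']
        calc a n * x^n = (a n * t^n) * (x/t)^n := by rw [← hxn]; ring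
        _ ≤ M * (x/t)^n := mul_le_mul_of_nonneg_right h1 (by positivity)
  -- final assembly
  rw [hρa]
  apply ENNReal.le_of_forall_nnreal_lt
  intro r hr
  have hr1 : (r : ℝ≥0∞) < ρ := lt_of_lt_of_le hr (min_le_left _ _)
  have hr2 : (r : ℝ≥0∞) < (ENNReal.ofReal (S * a 1))⁻¹ := lt_of_lt_of_le hr (min_le_right _ _)
  set x : ℝ := (r : ℝ) with hxdef
  have hx0 : 0 ≤ x := r.coe_nonneg
  have hxρ : ENNReal.ofReal x < ρ := by
    rw [hxdef, ENNReal.ofReal_coe_nnreal]; exact hr1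
  have hxq : S * a 1 * x < 1 := by
    set u : ℝ := S * a 1 with hudef
    have hu0 : 0 ≤ u := mul_nonneg (by linarith) (ha0 1)
    rcases eq_or_lt_of_le hu0 with h | h
    · rw [← h]; norm_num
    · have hinv : (ENNReal.ofReal u)⁻¹ = ENNReal.ofReal u⁻¹ :=
        (ENNReal.ofReal_inv_of_pos h).symm
      rw [hinv] at hr2
      have : x < u⁻¹ := by
        rw [← ENNReal.ofReal_coe_nnreal] at hr2
        have h2 : (r:ℝ) < u⁻¹ := (ENNReal.ofReal_lt_ofReal_iff (by positivity)).mp hr2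
        rw [hxdef]; exact h2
      calc u * x < u * u⁻¹ := mul_lt_mul_of_pos_left this h
      _ = 1 := by field_simp
  obtain ⟨k, hk⟩ := pow_unbounded_of_one_lt (x/r₀) (by norm_num : (1:ℝ) < 2)
  have hxk : x < 2^k * r₀ := by
    rw [div_lt_iff₀ hr₀] at hk
    linarith
  have hsumx : Summable (fun n => a n * x^n) := main k x hx0 hxρ hxq hxk
  have heq : (fun n => |a n| * x^n) = fun n => a n * x^n := by
    funext n; rw [abs_of_nonneg (ha0 n)]
  apply le_seriesRadius
  rw [heq]
  exact hsumx
end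

section
/- For every r ∈ 𝓡, the radius of convergence of A^r(x) = Σ_{n≥1} a^r_n x^n is at most min{ ρ_r, 1/(Σ_{j∈𝓡} |s_j| a^j_1) } (the second quantity interpreted as ∞ when Σ_{j∈𝓡} |s_j| a^j_1 = 0). -/
open scoped BigOperators ENNReal NNReal

set_option maxHeartbeats 1000000 in
/-- For every `r ∈ 𝓡`, the radius of convergence of `A^r(x) = Σ_{n≥1} a^r_n x^n` is at
most `min{ρ_r, 1/(Σ_{j∈𝓡} |s_j| a^j_1)}` (the second quantity `∞` when the sum is `0`). -/
theorem systems_radius_upper_bound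
    (ι : Type) [Fintype ι] [DecidableEq ι] [Nonempty ι]
    (s : ι → ℤ) (hs : ∀ r, s r ≠ 0)
    (p : ι → ℕ → ℝ) (hp : ∀ r k, 1 ≤ k → 0 < p r k)
    (ρ : ι → ℝ≥0∞)
    (hρ : ∀ r, ρ r = seriesRadius fun k => if k = 0 then 0 else p r k / (Nat.factorial k))
    (hρ0 : ∀ r, 0 < ρ r)
    (γ : ι → ℕ → ℝ)
    (hγ : ∀ r n, 1 ≤ n → γ r n = p r n
      + (∑ i ∈ Finset.Ico 1 n,
          ((|s r| : ℝ) * i - ((s r).sign : ℝ)) * γ r i * γ r (n - i))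
      + ∑ j ∈ Finset.univ.erase r, ∑ i ∈ Finset.Ico 1 n,
          (|s j| : ℝ) * i * γ j (n - i) * γ r i)
    (a : ι → ℕ → ℝ) (ha : ∀ r n, a r n = if n = 0 then 0 else γ r n / (Nat.factorial n)) :
    ∀ r, seriesRadius (a r) ≤
      min (ρ r) (ENNReal.ofReal (∑ j, (|s j| : ℝ) * a j 1))⁻¹ := by
  -- basic facts about s
  have habs : ∀ r : ι, (1:ℝ) ≤ (|s r| : ℝ) := by
    intro r
    exact_mod_cast Int.one_le_abs (by simpa using hs r)
  have hsign : ∀ r : ι, ((s r).sign : ℝ) ≤ 1 := by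
    intro r
    have : (s r).sign ≤ 1 := by
      rcases Int.lt_or_lt_of_ne (hs r) with h | h
      · simp [Int.sign_eq_neg_one_iff_neg.mpr h]
      · simp [Int.sign_eq_one_iff_pos.mpr h]
    exact_mod_cast this
  -- positivity of γ
  have hγpos : ∀ n, ∀ r : ι, 1 ≤ n → 0 < γ r n := by
    intro n
    induction n using Nat.strong_induction_on with
    | _ n ih =>
      intro r hn
      rw [hγ r n hn]
      have h1 : 0 ≤ ∑ i ∈ Finset.Ico 1 n,
          ((|s r| : ℝ) * i - ((s r).sign : ℝ)) * γ r i * γ r (n - i) := by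
        apply Finset.sum_nonneg
        intro i hi
        obtain ⟨hi1, hi2⟩ := Finset.mem_Ico.mp hi
        have hgi := (ih i hi2 r hi1).le
        have hgni := (ih (n - i) (by omega) r (by omega)).le
        have hcoef : 0 ≤ (|s r| : ℝ) * i - ((s r).sign : ℝ) := by
          have h1 := habs r
          have h2 := hsign r
          have hi' : (1:ℝ) ≤ i := by exact_mod_cast hi1
          nlinarith
        exact mul_nonneg (mul_nonneg hcoef hgi) hgni
      have h2 : 0 ≤ ∑ j ∈ Finset.univ.erase r, ∑ i ∈ Finset.Ico 1 n,
          (|s j| : ℝ) * i * γ j (n - i) * γ r i := by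
        apply Finset.sum_nonneg
        intro j _
        apply Finset.sum_nonneg
        intro i hi
        obtain ⟨hi1, hi2⟩ := Finset.mem_Ico.mp hi
        have hgi := (ih i hi2 r hi1).le
        have hgni := (ih (n - i) (by omega) j (by omega)).le
        have hi' : (0:ℝ) ≤ i := by positivity
        have h1 : (0:ℝ) ≤ (|s j| : ℝ) := by linarith [habs j]
        exact mul_nonneg (mul_nonneg (mul_nonneg h1 hi') hgni) hgi
      linarith [hp r n hn]
  -- p ≤ γ
  have hpγ : ∀ (r : ι) n, 1 ≤ n → p r n ≤ γ r n := by
    intro r n hn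
    rw [hγ r n hn]
    have h1 : 0 ≤ ∑ i ∈ Finset.Ico 1 n,
        ((|s r| : ℝ) * i - ((s r).sign : ℝ)) * γ r i * γ r (n - i) := by
      apply Finset.sum_nonneg
      intro i hi
      obtain ⟨hi1, hi2⟩ := Finset.mem_Ico.mp hi
      have hgi := (hγpos i r hi1).le
      have hgni := (hγpos (n - i) r (by omega)).le
      have hcoef : 0 ≤ (|s r| : ℝ) * i - ((s r).sign : ℝ) := by
        have h1 := habs r
        have h2 := hsign r
        have hi' : (1:ℝ) ≤ i := by exact_mod_cast hi1
        nlinarith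
      exact mul_nonneg (mul_nonneg hcoef hgi) hgni
    have h2 : 0 ≤ ∑ j ∈ Finset.univ.erase r, ∑ i ∈ Finset.Ico 1 n,
        (|s j| : ℝ) * i * γ j (n - i) * γ r i := by
      apply Finset.sum_nonneg
      intro j _
      apply Finset.sum_nonneg
      intro i hi
      obtain ⟨hi1, hi2⟩ := Finset.mem_Ico.mp hi
      have hgi := (hγpos i r hi1).le
      have hgni := (hγpos (n - i) j (by omega)).le
      have hi' : (0:ℝ) ≤ i := by positivity
      have h1 : (0:ℝ) ≤ (|s j| : ℝ) := by linarith [habs j]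
      exact mul_nonneg (mul_nonneg (mul_nonneg h1 hi') hgni) hgi
    linarith
  -- the key growth estimate: γ r (n+1) ≥ ((n:ℝ) * S - γ r 1) * γ r n for n ≥ 1
  set S : ℝ := ∑ j, (|s j| : ℝ) * γ j 1 with hS
  have hgrow : ∀ (r : ι) (n : ℕ), 1 ≤ n → ((n:ℝ) * S - γ r 1) * γ r n ≤ γ r (n+1) := by
    intro r n hn
    rw [hγ r (n+1) (by omega)]
    have hmem : n ∈ Finset.Ico 1 (n+1) := Finset.mem_Ico.mpr ⟨hn, by omega⟩
    -- first sum lower bound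
    have hsum1 : ((|s r| : ℝ) * n - ((s r).sign : ℝ)) * γ r n * γ r 1 ≤
        ∑ i ∈ Finset.Ico 1 (n+1),
          ((|s r| : ℝ) * i - ((s r).sign : ℝ)) * γ r i * γ r (n+1-i) := by
      have := Finset.single_le_sum (f := fun i =>
          ((|s r| : ℝ) * i - ((s r).sign : ℝ)) * γ r i * γ r (n+1-i)) (s := Finset.Ico 1 (n+1))
        (fun i hi => by
          obtain ⟨hi1, hi2⟩ := Finset.mem_Ico.mp hi
          have hgi := (hγpos i r hi1).le
          have hgni := (hγpos (n+1-i) r (by omega)).le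
          have hcoef : 0 ≤ (|s r| : ℝ) * i - ((s r).sign : ℝ) := by
            have h1 := habs r
            have h2 := hsign r
            have hi' : (1:ℝ) ≤ i := by exact_mod_cast hi1
            nlinarith
          exact mul_nonneg (mul_nonneg hcoef hgi) hgni) hmem
      simpa using this
    -- second sum lower bound
    have hsum2 : ∑ j ∈ Finset.univ.erase r, (|s j| : ℝ) * n * γ j 1 * γ r n ≤
        ∑ j ∈ Finset.univ.erase r, ∑ i ∈ Finset.Ico 1 (n+1),
          (|s j| : ℝ) * i * γ j (n+1-i) * γ r i := by
      apply Finset.sum_le_sum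
      intro j _
      have := Finset.single_le_sum (f := fun i =>
          (|s j| : ℝ) * i * γ j (n+1-i) * γ r i) (s := Finset.Ico 1 (n+1))
        (fun i hi => by
          obtain ⟨hi1, hi2⟩ := Finset.mem_Ico.mp hi
          have hgi := (hγpos i r hi1).le
          have hgnj := (hγpos (n+1-i) j (by omega)).le
          have hi' : (0:ℝ) ≤ i := by positivity
          have h1 : (0:ℝ) ≤ (|s j| : ℝ) := by linarith [habs j]
          exact mul_nonneg (mul_nonneg (mul_nonneg h1 hi') hgnj) hgi) hmem
      simpa using this
    have hsplit : S = (|s r| : ℝ) * γ r 1 + ∑ j ∈ Finset.univ.erase r, (|s j| : ℝ) * γ j 1 :=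
      (Finset.add_sum_erase Finset.univ (fun j => (|s j| : ℝ) * γ j 1) (Finset.mem_univ r)).symm
    have heq : ∑ j ∈ Finset.univ.erase r, (|s j| : ℝ) * n * γ j 1 * γ r n =
        (n:ℝ) * γ r n * ∑ j ∈ Finset.univ.erase r, (|s j| : ℝ) * γ j 1 := by
      rw [Finset.mul_sum]; apply Finset.sum_congr rfl; intro j _; ring
    have hpn := (hp r (n+1) (by omega)).le
    have hsig := hsign r
    have hγn := (hγpos n r hn).le
    have hγ1 := (hγpos 1 r le_rfl).le
    have hB : (n:ℝ) * γ r n * ∑ j ∈ Finset.univ.erase r, (|s j| : ℝ) * γ j 1 ≤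
        ∑ j ∈ Finset.univ.erase r, ∑ i ∈ Finset.Ico 1 (n+1),
          (|s j| : ℝ) * i * γ j (n+1-i) * γ r i := heq ▸ hsum2
    have key : 0 ≤ (1 - ((s r).sign : ℝ)) * (γ r n * γ r 1) :=
      mul_nonneg (by linarith) (mul_nonneg hγn hγ1)
    have expand : ((n:ℝ) * S - γ r 1) * γ r n =
        ((|s r| : ℝ) * n - ((s r).sign : ℝ)) * γ r n * γ r 1
          + (n:ℝ) * γ r n * (∑ j ∈ Finset.univ.erase r, (|s j| : ℝ) * γ j 1)
          - (1 - ((s r).sign : ℝ)) * (γ r n * γ r 1) := by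
      rw [hsplit]; ring
    linarith [hsum1, hB, key, hpn, expand]
  -- facts about a
  have ha1 : ∀ j : ι, a j 1 = γ j 1 := by
    intro j; rw [ha]; norm_num
  have haT : (∑ j, (|s j| : ℝ) * a j 1) = S := by
    rw [hS]; exact Finset.sum_congr rfl fun j _ => by rw [ha1]
  have hapos : ∀ (r : ι) (n : ℕ), 1 ≤ n → 0 < a r n := by
    intro r n hn
    rw [ha, if_neg (by omega)]
    exact div_pos (hγpos n r hn) (by positivity)
  have hanonneg : ∀ (r : ι) (n : ℕ), 0 ≤ a r n := by
    intro r n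
    rcases Nat.eq_zero_or_pos n with h | h
    · simp [ha, h]
    · exact (hapos r n h).le
  have hSnonneg : 0 ≤ S := by
    rw [hS]
    exact Finset.sum_nonneg fun j _ =>
      mul_nonneg (by linarith [habs j]) (hγpos 1 j le_rfl).le
  intro r
  refine le_min ?_ ?_
  · -- bound by ρ r
    rw [hρ r]
    unfold seriesRadius
    refine iSup₂_le fun x hx => ?_
    have hsum : Summable fun n =>
        |if n = 0 then 0 else p r n / (Nat.factorial n : ℝ)| * (x : ℝ) ^ n := by
      refine Summable.of_nonneg_of_le
        (fun n => mul_nonneg (abs_nonneg _) (pow_nonneg x.coe_nonneg n)) (fun n => ?_) hx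
      rcases Nat.eq_zero_or_pos n with h | h
      · simp [h]
      · rw [if_neg (by omega)]
        have hfac : (0:ℝ) < (Nat.factorial n : ℝ) := by positivity
        have hc : 0 ≤ p r n / (Nat.factorial n : ℝ) :=
          div_nonneg (hp r n h).le hfac.le
        rw [abs_of_nonneg hc, abs_of_nonneg (hanonneg r n)]
        have hle : p r n / (Nat.factorial n : ℝ) ≤ a r n := by
          rw [ha, if_neg (by omega)]
          gcongr
          exact hpγ r n h
        exact mul_le_mul_of_nonneg_right hle (pow_nonneg x.coe_nonneg n)
    exact le_iSup₂ (f := fun (x : ℝ≥0)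
      (_ : Summable fun n => |if n = 0 then 0 else p r n / (Nat.factorial n : ℝ)| * (x:ℝ)^n) =>
      (x : ℝ≥0∞)) x hsum
  · -- bound by the inverse of the sum
    unfold seriesRadius
    refine iSup₂_le fun x hx => ?_
    rw [haT]
    rcases eq_or_lt_of_le hSnonneg with hS0 | hSpos
    · rw [← hS0]; simp
    · have hxS : (x : ℝ) * S ≤ 1 := by
        by_contra hcon
        push_neg at hcon
        have hx0 : (0:ℝ) < x := by nlinarith
        set C : ℝ := γ r 1 with hC
        have hC0 : 0 < C := hγpos 1 r le_rfl
        set q : ℝ := (1 + (x:ℝ) * S) / 2 with hq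
        have hq1 : 1 < q := by rw [hq]; linarith
        have hqlt : q < (x:ℝ) * S := by rw [hq]; linarith
        obtain ⟨M, hM⟩ := exists_nat_ge ((q + (x:ℝ) * C) / ((x:ℝ) * S - q))
        set N : ℕ := max M 1 with hN
        have hN1 : 1 ≤ N := le_max_right _ _
        have hMN : (M:ℝ) ≤ N := by exact_mod_cast le_max_left M 1
        -- the one-step geometric growth
        have hstep : ∀ n, N ≤ n → q * (a r n * (x:ℝ)^n) ≤ a r (n+1) * (x:ℝ)^(n+1) := by
          intro n hn
          have hn1 : 1 ≤ n := le_trans hN1 hn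
          have hg := hgrow r n hn1
          have hnM : (q + (x:ℝ) * C) / ((x:ℝ) * S - q) ≤ (n:ℝ) := by
            have : (N:ℝ) ≤ n := by exact_mod_cast hn
            linarith
          have hcond : q * ((n:ℝ) + 1) ≤ (x:ℝ) * ((n:ℝ) * S - C) := by
            rw [div_le_iff₀ (by linarith)] at hnM
            nlinarith
          have hγn := (hγpos n r hn1).le
          have hγn1 := (hγpos (n+1) r (by omega)).le
          have key : q * ((n:ℝ) + 1) * γ r n ≤ (x:ℝ) * γ r (n+1) := by
            nlinarith [mul_le_mul_of_nonneg_right hcond hγn,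
              mul_le_mul_of_nonneg_left hg hx0.le]
          have hF : (0:ℝ) < (Nat.factorial n : ℝ) := by positivity
          have hxpow : (0:ℝ) ≤ (x:ℝ)^n := pow_nonneg x.coe_nonneg n
          have e1 : q * (a r n * (x:ℝ)^n)
              = (q * ((n:ℝ)+1) * γ r n) * (x:ℝ)^n / (((n:ℝ)+1) * (Nat.factorial n : ℝ)) := by
            rw [ha, if_neg (by omega)]
            field_simp
          have e2 : a r (n+1) * (x:ℝ)^(n+1)
              = ((x:ℝ) * γ r (n+1)) * (x:ℝ)^n / (((n:ℝ)+1) * (Nat.factorial n : ℝ)) := by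
            rw [ha, if_neg (by omega), Nat.factorial_succ]
            push_cast
            field_simp
            ring
          rw [e1, e2]
          gcongr
        -- iterate the growth
        have hgeo : ∀ k, q^k * (a r N * (x:ℝ)^N) ≤ a r (N+k) * (x:ℝ)^(N+k) := by
          intro k
          induction k with
          | zero => simp
          | succ k ihk =>
            have hst := hstep (N+k) (Nat.le_add_right N k)
            have hq0 : (0:ℝ) ≤ q := by linarith
            calc q^(k+1) * (a r N * (x:ℝ)^N) = q * (q^k * (a r N * (x:ℝ)^N)) := by ring
              _ ≤ q * (a r (N+k) * (x:ℝ)^(N+k)) := mul_le_mul_of_nonneg_left ihk hq0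
              _ ≤ a r (N+(k+1)) * (x:ℝ)^(N+(k+1)) := hst
        -- summability contradiction
        have hsm : Summable fun k => a r (N+k) * (x:ℝ)^(N+k) := by
          have h1 : Summable fun k => |a r (k+N)| * (x:ℝ)^(k+N) :=
            (summable_nat_add_iff N).mpr hx
          refine h1.congr fun k => ?_
          rw [abs_of_nonneg (hanonneg r (k+N)), Nat.add_comm k N]
        have hc : 0 < a r N * (x:ℝ)^N :=
          mul_pos (hapos r N hN1) (pow_pos hx0 N)
        have hsq : Summable fun k => q^k * (a r N * (x:ℝ)^N) :=
          hsm.of_nonneg_of_le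
            (fun k => mul_nonneg (pow_nonneg (by linarith) k) hc.le) hgeo
        have hgq : Summable fun k : ℕ => q^k := by
          have h2 := hsq.mul_right (a r N * (x:ℝ)^N)⁻¹
          refine h2.congr fun k => ?_
          field_simp
          exact div_self (hapos r N hN1).ne'
        have := summable_geometric_iff_norm_lt_one.mp hgq
        rw [Real.norm_eq_abs, abs_of_pos (by linarith)] at this
        linarith
      rw [ENNReal.le_inv_iff_mul_le, ← ENNReal.ofReal_coe_nnreal,
        ← ENNReal.ofReal_mul x.coe_nonneg]
      exact ENNReal.ofReal_le_one.mpr hxS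
end

section
/- For all r, r′ ∈ 𝓡, the power series A^r(x) and A^{r′}(x) have the same radius of convergence. -/
set_option maxHeartbeats 1000000
open scoped BigOperators ENNReal NNReal

private lemma radius_mono_aux (c d : ℕ → ℝ) (hc : ∀ n, 0 ≤ c n) (hd : ∀ n, 0 ≤ d n)
    (K : ℝ) (hK : 0 < K) (h : ∀ n, 2 ≤ n → K / n * d (n - 1) ≤ c n) :
    seriesRadius c ≤ seriesRadius d := by
  rw [seriesRadius]
  apply iSup₂_le
  intro x hx
  apply ENNReal.le_of_forall_nnreal_lt
  intro y hy
  have hyx : (y : ℝ) < x := by exact_mod_cast hy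
  have hx0 : (0 : ℝ) < x := lt_of_le_of_lt y.coe_nonneg hyx
  set q : ℝ := (y : ℝ) / x with hqdef
  have hq0 : 0 ≤ q := div_nonneg y.coe_nonneg hx0.le
  have hq1 : q < 1 := (div_lt_one hx0).2 hyx
  -- bound sequence F m = (m+2) * q^(m+1), summable, hence bounded by C = tsum
  have hF : Summable fun m : ℕ => ((m : ℝ) + 2) * q ^ (m + 1) := by
    have h1 : Summable fun m : ℕ => (m : ℝ) ^ 1 * q ^ m :=
      summable_pow_mul_geometric_of_norm_lt_one 1
        (by rwa [Real.norm_eq_abs, abs_of_nonneg hq0])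
    have h2 : Summable fun m : ℕ => q ^ m := summable_geometric_of_lt_one hq0 hq1
    have := ((h1.add h2).add h2).mul_left q
    apply this.congr
    intro m
    ring
  have hFnn : ∀ m : ℕ, 0 ≤ ((m : ℝ) + 2) * q ^ (m + 1) := fun m =>
    mul_nonneg (by positivity) (pow_nonneg hq0 _)
  set C : ℝ := ∑' m : ℕ, ((m : ℝ) + 2) * q ^ (m + 1) with hCdef
  have hC : ∀ m : ℕ, ((m : ℝ) + 2) * q ^ (m + 1) ≤ C := fun m =>
    Summable.le_tsum hF m (fun j _ => hFnn j)
  -- summability chain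
  have h1 : Summable fun n => c n * (x : ℝ) ^ n := by
    apply hx.congr; intro n; rw [abs_of_nonneg (hc n)]
  have h2 : Summable fun m => c (m + 2) * (x : ℝ) ^ (m + 2) :=
    (summable_nat_add_iff 2).2 h1
  have h3 : Summable fun m : ℕ => K / (m + 2) * d (m + 1) * (x : ℝ) ^ (m + 2) := by
    apply Summable.of_nonneg_of_le _ _ h2
    · intro m
      have : (0:ℝ) < (m:ℝ) + 2 := by positivity
      exact mul_nonneg (mul_nonneg (div_nonneg hK.le this.le) (hd _)) (by positivity)
    · intro m
      have hle := h (m + 2) (by omega)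
      have : ((m + 2 : ℕ) : ℝ) = (m : ℝ) + 2 := by push_cast; ring
      rw [this] at hle
      have hxp : (0:ℝ) ≤ (x:ℝ) ^ (m + 2) := by positivity
      exact mul_le_mul_of_nonneg_right hle hxp
  have h4 : Summable fun m : ℕ => d (m + 1) * (y : ℝ) ^ (m + 1) := by
    apply Summable.of_nonneg_of_le _ _ ((h3.mul_left (C / (K * x))))
    · intro m; exact mul_nonneg (hd _) (by positivity)
    · intro m
      have hy' : (y : ℝ) = q * x := by rw [hqdef, div_mul_cancel₀ _ hx0.ne']
      have hkey : ((m : ℝ) + 2) * q ^ (m + 1) ≤ C := hC m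
      have hm2 : (0:ℝ) < (m:ℝ) + 2 := by positivity
      rw [hy']
      have : C / (K * x) * (K / ((m:ℝ) + 2) * d (m + 1) * (x : ℝ) ^ (m + 2))
          = (C / ((m:ℝ) + 2)) * d (m + 1) * (x:ℝ) ^ (m + 1) := by
        field_simp
        ring
      rw [this, mul_pow]
      have h5 : d (m+1) * (q ^ (m+1) * (x:ℝ)^(m+1))
          = (q^(m+1) * d (m+1)) * (x:ℝ)^(m+1) := by ring
      rw [h5]
      apply mul_le_mul_of_nonneg_right _ (by positivity)
      rw [div_mul_eq_mul_div, le_div_iff₀ hm2]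
      calc q ^ (m+1) * d (m+1) * ((m:ℝ) + 2)
          = (((m:ℝ) + 2) * q ^ (m+1)) * d (m+1) := by ring
        _ ≤ C * d (m + 1) := mul_le_mul_of_nonneg_right hkey (hd _)
  have h6 : Summable fun m : ℕ => |d m| * (y : ℝ) ^ m := by
    have := (summable_nat_add_iff (f := fun m => d m * (y:ℝ) ^ m) 1).1 h4
    apply this.congr; intro m; rw [abs_of_nonneg (hd m)]
  rw [seriesRadius]
  exact le_iSup₂ (f := fun (z : ℝ≥0) (_ : Summable fun n => |d n| * (z : ℝ) ^ n) => (z : ℝ≥0∞)) y h6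


/-- For all `r, r′ ∈ 𝓡` the power series `A^r` and `A^{r′}` have the same radius of
convergence. -/
theorem systems_same_radius
    (ι : Type) [Fintype ι] [DecidableEq ι] [Nonempty ι]
    (s : ι → ℤ) (hs : ∀ r, s r ≠ 0)
    (p : ι → ℕ → ℝ) (hp : ∀ r k, 1 ≤ k → 0 < p r k)
    (ρ : ι → ℝ≥0∞)
    (hρ : ∀ r, ρ r = seriesRadius fun k => if k = 0 then 0 else p r k / (Nat.factorial k))
    (hρ0 : ∀ r, 0 < ρ r)
    (γ : ι → ℕ → ℝ)
    (hγ : ∀ r n, 1 ≤ n → γ r n = p r n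
      + (∑ i ∈ Finset.Ico 1 n,
          ((|s r| : ℝ) * i - ((s r).sign : ℝ)) * γ r i * γ r (n - i))
      + ∑ j ∈ Finset.univ.erase r, ∑ i ∈ Finset.Ico 1 n,
          (|s j| : ℝ) * i * γ j (n - i) * γ r i)
    (a : ι → ℕ → ℝ) (ha : ∀ r n, a r n = if n = 0 then 0 else γ r n / (Nat.factorial n)) :
    ∀ r r' : ι, seriesRadius (a r) = seriesRadius (a r') := by
  have hsabs : ∀ r, (1:ℝ) ≤ (|s r| : ℝ) := by
    intro r; exact_mod_cast Int.one_le_abs (hs r)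
  have hsign : ∀ r, ((s r).sign : ℝ) ≤ 1 := by
    intro r
    have : (s r).sign = 1 ∨ (s r).sign = -1 := by
      rcases lt_trichotomy (s r) 0 with h1|h1|h1
      · right; exact Int.sign_eq_neg_one_iff_neg.2 h1
      · exact absurd h1 (hs r)
      · left; exact Int.sign_eq_one_iff_pos.2 h1
    rcases this with h|h <;> rw [h] <;> norm_num
  have hγpos : ∀ n, 1 ≤ n → ∀ r, 0 < γ r n := by
    intro n
    induction n using Nat.strong_induction_on with
    | _ n ih =>
      intro hn r
      rw [hγ r n hn]
      have hS1 : 0 ≤ ∑ i ∈ Finset.Ico 1 n,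
          ((|s r| : ℝ) * i - ((s r).sign : ℝ)) * γ r i * γ r (n - i) := by
        apply Finset.sum_nonneg
        intro i hi
        rw [Finset.mem_Ico] at hi
        have hi1 : (1:ℝ) ≤ (i:ℝ) := by exact_mod_cast hi.1
        have hfac : 0 ≤ (|s r| : ℝ) * i - ((s r).sign : ℝ) := by
          have : (1:ℝ) ≤ (|s r| : ℝ) * i :=
            le_trans (hsabs r) (le_mul_of_one_le_right (by linarith [hsabs r]) hi1)
          linarith [hsign r]
        have hγi : 0 < γ r i := ih i hi.2 hi.1 r
        have hγni : 0 < γ r (n - i) := ih (n - i) (by omega) (by omega) r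
        positivity
      have hS2 : 0 ≤ ∑ j ∈ Finset.univ.erase r, ∑ i ∈ Finset.Ico 1 n,
          (|s j| : ℝ) * i * γ j (n - i) * γ r i := by
        apply Finset.sum_nonneg
        intro j _
        apply Finset.sum_nonneg
        intro i hi
        rw [Finset.mem_Ico] at hi
        have hγi : 0 < γ r i := ih i hi.2 hi.1 r
        have hγni : 0 < γ j (n - i) := ih (n - i) (by omega) (by omega) j
        have h1 : (0:ℝ) ≤ (|s j| : ℝ) := by linarith [hsabs j]
        have h2 : (0:ℝ) ≤ (i:ℝ) := Nat.cast_nonneg i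
        positivity
      have := hp r n hn
      linarith
  -- generic nonnegativity facts
  have htermnn : ∀ (r j : ι) (n i : ℕ), 1 ≤ i → i < n →
      0 ≤ (|s j| : ℝ) * i * γ j (n - i) * γ r i := by
    intro r j n i hi1 hi2
    have hγi : 0 < γ r i := hγpos i hi1 r
    have hγni : 0 < γ j (n - i) := hγpos (n - i) (by omega) j
    have h1 : (0:ℝ) ≤ (|s j| : ℝ) := by linarith [hsabs j]
    have h2 : (0:ℝ) ≤ (i:ℝ) := Nat.cast_nonneg i
    positivity
  have hS1nn : ∀ (r : ι) (n : ℕ), 0 ≤ ∑ i ∈ Finset.Ico 1 n,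
      ((|s r| : ℝ) * i - ((s r).sign : ℝ)) * γ r i * γ r (n - i) := by
    intro r n
    apply Finset.sum_nonneg
    intro i hi
    rw [Finset.mem_Ico] at hi
    have hi1 : (1:ℝ) ≤ (i:ℝ) := by exact_mod_cast hi.1
    have hfac : 0 ≤ (|s r| : ℝ) * i - ((s r).sign : ℝ) := by
      have : (1:ℝ) ≤ (|s r| : ℝ) * i :=
        le_trans (hsabs r) (le_mul_of_one_le_right (by linarith [hsabs r]) hi1)
      linarith [hsign r]
    have hγi : 0 < γ r i := hγpos i hi.1 r
    have hγni : 0 < γ r (n - i) := hγpos (n - i) (by omega) r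
    positivity
  have hann : ∀ r n, 0 ≤ a r n := by
    intro r n
    rcases Nat.eq_zero_or_pos n with h|h
    · simp [ha, h]
    · rw [ha, if_neg (by omega)]
      have h1 := hγpos n h r
      have h2 : (0:ℝ) < (n.factorial : ℝ) := by exact_mod_cast n.factorial_pos
      positivity
  have key : ∀ r r' : ι, r' ≠ r → seriesRadius (a r) ≤ seriesRadius (a r') := by
    intro r r' hne
    have hγ1 : 0 < γ r 1 := hγpos 1 le_rfl r
    have hK : (0:ℝ) < (|s r'| : ℝ) * γ r 1 := mul_pos (by linarith [hsabs r']) hγ1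
    apply radius_mono_aux _ _ (hann r) (hann r') ((|s r'| : ℝ) * γ r 1) hK
    intro n hn
    have hγn : (|s r'| : ℝ) * γ r' (n - 1) * γ r 1 ≤ γ r n := by
      rw [hγ r n (by omega)]
      have step2 : (|s r'| : ℝ) * ((1:ℕ):ℝ) * γ r' (n - 1) * γ r 1 ≤
          ∑ i ∈ Finset.Ico 1 n, (|s r'| : ℝ) * i * γ r' (n - i) * γ r i := by
        apply Finset.single_le_sum (f := fun i : ℕ => (|s r'| : ℝ) * i * γ r' (n - i) * γ r i)
        · intro i hi
          rw [Finset.mem_Ico] at hi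
          exact htermnn r r' n i hi.1 hi.2
        · exact Finset.mem_Ico.2 ⟨le_rfl, by omega⟩
      have step1 : (∑ i ∈ Finset.Ico 1 n, (|s r'| : ℝ) * i * γ r' (n - i) * γ r i) ≤
          ∑ j ∈ Finset.univ.erase r, ∑ i ∈ Finset.Ico 1 n,
            (|s j| : ℝ) * i * γ j (n - i) * γ r i := by
        apply Finset.single_le_sum
          (f := fun j => ∑ i ∈ Finset.Ico 1 n, (|s j| : ℝ) * i * γ j (n - i) * γ r i)
        · intro j _
          apply Finset.sum_nonneg
          intro i hi
          rw [Finset.mem_Ico] at hi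
          exact htermnn r j n i hi.1 hi.2
        · exact Finset.mem_erase.2 ⟨hne, Finset.mem_univ r'⟩
      rw [Nat.cast_one, mul_one] at step2
      have := hp r n (by omega)
      linarith [hS1nn r n, le_trans step2 step1]
    -- translate to a
    rw [ha r n, ha r' (n-1), if_neg (by omega), if_neg (by omega)]
    have hfac : (n.factorial : ℝ) = (n : ℝ) * ((n-1).factorial : ℝ) := by
      rw [← Nat.cast_mul, Nat.mul_factorial_pred (by omega)]
    have hn0 : (0:ℝ) < (n:ℝ) := by exact_mod_cast (by omega : 0 < n)
    have hf0 : (0:ℝ) < ((n-1).factorial : ℝ) := by exact_mod_cast (n-1).factorial_pos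
    rw [hfac, div_mul_div_comm]
    apply div_le_div_of_nonneg_right ?_ (by positivity)
    calc (|s r'| : ℝ) * γ r 1 * γ r' (n - 1)
        = (|s r'| : ℝ) * γ r' (n - 1) * γ r 1 := by ring
      _ ≤ γ r n := hγn
  intro r r'
  rcases eq_or_ne r r' with h|h
  · rw [h]
  · exact le_antisymm (key r r' h.symm) (key r' r h)
end

section
/- The convolution S ⋆ Y vanishes on products of counit-zero elements: (S ⋆ Y)(1) = 0, and for all a, b ∈ H with ε(a) = 0 and ε(b) = 0, one has (S ⋆ Y)(a·b) = 0. -/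
open TensorProduct Coalgebra HopfAlgebra

section Helpers

variable {R H : Type*} [CommRing R] [CommRing H] [HopfAlgebra R H]

lemma repr_mul {x y : H} (rx : Coalgebra.Repr R x (H × H)) (ry : Coalgebra.Repr R y (H × H)) :
    ∑ i ∈ rx.index, ∑ j ∈ ry.index,
      (rx.left i * ry.left j) ⊗ₜ[R] (rx.right i * ry.right j) = Coalgebra.comul (x * y) := by
  rw [Bialgebra.comul_mul, ← rx.eq, ← ry.eq, Finset.sum_mul_sum]
  simp [Algebra.TensorProduct.tmul_mul_tmul]

lemma sum_antipode_mul_mul {x y : H} (rx : Coalgebra.Repr R x (H × H)) (ry : Coalgebra.Repr R y (H × H)) :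
    ∑ i ∈ rx.index, ∑ j ∈ ry.index,
      antipode (R := R) (rx.left i * ry.left j) * (rx.right i * ry.right j)
      = (counit (R := R) x * counit (R := R) y) • (1 : H) := by
  let r : Coalgebra.Repr R (x * y) ((H × H) × (H × H)) :=
    ⟨rx.index ×ˢ ry.index, fun p => rx.left p.1 * ry.left p.2,
      fun p => rx.right p.1 * ry.right p.2, by rw [Finset.sum_product]; exact repr_mul rx ry⟩
  have h := HopfAlgebra.sum_antipode_mul_eq_smul (R := R) r
  rw [Finset.sum_product] at h
  simpa using h

lemma sum_counit_smul_right {x : H} (r : Coalgebra.Repr R x (H × H)) :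
    ∑ i ∈ r.index, counit (R := R) (r.right i) • r.left i = x := by
  have h := Coalgebra.sum_tmul_counit_eq (R := R) r
  calc ∑ i ∈ r.index, counit (R := R) (r.right i) • r.left i
      = (TensorProduct.rid R H) (∑ i ∈ r.index, r.left i ⊗ₜ counit (R := R) (r.right i)) := by
        rw [map_sum]; simp_rw [TensorProduct.rid_tmul]
    _ = x := by rw [h]; simp

lemma sum_counit_smul_left {x : H} (r : Coalgebra.Repr R x (H × H)) :
    ∑ i ∈ r.index, counit (R := R) (r.left i) • r.right i = x := by
  have h := Coalgebra.sum_counit_tmul_eq (R := R) r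
  calc ∑ i ∈ r.index, counit (R := R) (r.left i) • r.right i
      = (TensorProduct.lid R H) (∑ i ∈ r.index, counit (R := R) (r.left i) ⊗ₜ r.right i) := by
        rw [map_sum]; simp_rw [TensorProduct.lid_tmul]
    _ = x := by rw [h]; simp

lemma sum_counit_smul_map_left {x : H} (f : H →ₗ[R] H) (r : Coalgebra.Repr R x (H × H)) :
    ∑ i ∈ r.index, counit (R := R) (r.left i) • f (r.right i) = f x := by
  simp_rw [← map_smul]
  rw [← map_sum, sum_counit_smul_left]

lemma sum_counit_smul_map_right {x : H} (f : H →ₗ[R] H) (r : Coalgebra.Repr R x (H × H)) :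
    ∑ i ∈ r.index, counit (R := R) (r.right i) • f (r.left i) = f x := by
  simp_rw [← map_smul]
  rw [← map_sum, sum_counit_smul_right]

lemma triple_sum_eq (f g h : H →ₗ[R] H) {y : H} (r : Coalgebra.Repr R y (H × H))
    (a₁ : ∀ i, Coalgebra.Repr R (r.left i) (H × H)) (a₂ : ∀ i, Coalgebra.Repr R (r.right i) (H × H)) :
    ∑ i ∈ r.index, ∑ j ∈ (a₂ i).index,
      f (r.left i) * (g ((a₂ i).left j) * h ((a₂ i).right j)) =
    ∑ i ∈ r.index, ∑ j ∈ (a₁ i).index,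
      f ((a₁ i).left j) * (g ((a₁ i).right j) * h (r.right i)) := by
  have h1 := Coalgebra.sum_map_tmul_tmul_eq (R := R) f g h y (repr := r) (a₁ := a₁) (a₂ := a₂)
  have h2 := congrArg (fun t => (LinearMap.mul' R H)
    (LinearMap.lTensor H (LinearMap.mul' R H) t)) h1
  simpa [map_sum] using h2

lemma antipode_mul_aux (x y : H) (rx : Coalgebra.Repr R x (H × H)) (ry : Coalgebra.Repr R y (H × H))
    (rx1 : ∀ i, Coalgebra.Repr R (rx.left i) (H × H)) (rx2 : ∀ i, Coalgebra.Repr R (rx.right i) (H × H))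
    (ry1 : ∀ j, Coalgebra.Repr R (ry.left j) (H × H)) (ry2 : ∀ j, Coalgebra.Repr R (ry.right j) (H × H)) :
    antipode (R := R) (x * y) = antipode (R := R) x * antipode (R := R) y := by
  set S : H →ₗ[R] H := antipode (R := R) with hS
  set T : H := ∑ i ∈ rx.index, ∑ k ∈ (rx1 i).index, ∑ j ∈ ry.index, ∑ l ∈ (ry1 j).index,
      S ((rx1 i).left k * (ry1 j).left l) *
        (((rx1 i).right k * S (rx.right i)) * ((ry1 j).right l * S (ry.right j))) with hT
  have eA1 : T = ∑ i ∈ rx.index, ∑ j ∈ ry.index, ∑ k ∈ (rx1 i).index, ∑ l ∈ (ry1 j).index,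
      (S ((rx1 i).left k * (ry1 j).left l) * ((rx1 i).right k * (ry1 j).right l)) *
        (S (rx.right i) * S (ry.right j)) := by
    rw [hT]
    refine Finset.sum_congr rfl fun i _ => ?_
    rw [Finset.sum_comm]
    exact Finset.sum_congr rfl fun j _ => Finset.sum_congr rfl fun k _ =>
      Finset.sum_congr rfl fun l _ => by ring
  have eA2 : T = ∑ i ∈ rx.index, ∑ j ∈ ry.index,
      (counit (R := R) (rx.left i) • S (rx.right i)) *
        (counit (R := R) (ry.left j) • S (ry.right j)) := by
    rw [eA1]
    refine Finset.sum_congr rfl fun i _ => Finset.sum_congr rfl fun j _ => ?_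
    simp_rw [← Finset.sum_mul]
    rw [sum_antipode_mul_mul (rx1 i) (ry1 j), smul_mul_smul_comm, smul_mul_assoc, one_mul]
  have claimA : T = S x * S y := by
    rw [eA2, ← Finset.sum_mul_sum, sum_counit_smul_map_left S rx, sum_counit_smul_map_left S ry]
  have step1 : T = ∑ i ∈ rx.index, ∑ k ∈ (rx1 i).index,
      S ((rx1 i).left k * y) * ((rx1 i).right k * S (rx.right i)) := by
    rw [hT]
    refine Finset.sum_congr rfl fun i _ => Finset.sum_congr rfl fun k _ => ?_
    set u : H := (rx1 i).left k with hu
    set u' : H := (rx1 i).right k * S (rx.right i) with hu'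
    set f : H →ₗ[R] H := (LinearMap.mulRight R u').comp (S.comp (LinearMap.mulLeft R u)) with hf
    have hfapp : ∀ p : H, f p = S (u * p) * u' := fun p => rfl
    have e1 : ∑ j ∈ ry.index, ∑ l ∈ (ry1 j).index,
        S (u * (ry1 j).left l) * (u' * ((ry1 j).right l * S (ry.right j)))
        = ∑ j ∈ ry.index, ∑ l ∈ (ry1 j).index,
          f ((ry1 j).left l) * ((LinearMap.id : H →ₗ[R] H) ((ry1 j).right l) * S (ry.right j)) := by
      refine Finset.sum_congr rfl fun j _ => Finset.sum_congr rfl fun l _ => ?_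
      rw [hfapp]; simp only [LinearMap.id_coe, id_eq]; ring
    have e2 : (∑ j ∈ ry.index, ∑ l ∈ (ry2 j).index,
        f (ry.left j) * ((LinearMap.id : H →ₗ[R] H) ((ry2 j).left l) * S ((ry2 j).right l)))
        = f y := by
      have e3 : ∀ j ∈ ry.index, (∑ l ∈ (ry2 j).index,
          f (ry.left j) * ((LinearMap.id : H →ₗ[R] H) ((ry2 j).left l) * S ((ry2 j).right l)))
          = (counit (R := R) (ry.right j)) • f (ry.left j) := by
        intro j _
        rw [← Finset.mul_sum]
        simp only [LinearMap.id_coe, id_eq]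
        rw [sum_mul_antipode_eq_smul (ry2 j), mul_smul_comm, mul_one]
      rw [Finset.sum_congr rfl e3, sum_counit_smul_map_right f ry]
    rw [e1, ← triple_sum_eq f (LinearMap.id : H →ₗ[R] H) S ry ry1 ry2, e2, hfapp]
  have step2 : (∑ i ∈ rx.index, ∑ k ∈ (rx1 i).index,
      S ((rx1 i).left k * y) * ((rx1 i).right k * S (rx.right i))) = S (x * y) := by
    set f : H →ₗ[R] H := S.comp (LinearMap.mulRight R y) with hf
    have hfapp : ∀ p : H, f p = S (p * y) := fun p => rfl
    have e1 : (∑ i ∈ rx.index, ∑ k ∈ (rx1 i).index,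
        S ((rx1 i).left k * y) * ((rx1 i).right k * S (rx.right i)))
        = ∑ i ∈ rx.index, ∑ k ∈ (rx1 i).index,
          f ((rx1 i).left k) * ((LinearMap.id : H →ₗ[R] H) ((rx1 i).right k) * S (rx.right i)) := by
      refine Finset.sum_congr rfl fun i _ => Finset.sum_congr rfl fun k _ => ?_
      rw [hfapp]; simp only [LinearMap.id_coe, id_eq]
    have e2 : (∑ i ∈ rx.index, ∑ k ∈ (rx2 i).index,
        f (rx.left i) * ((LinearMap.id : H →ₗ[R] H) ((rx2 i).left k) * S ((rx2 i).right k)))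
        = f x := by
      have e3 : ∀ i ∈ rx.index, (∑ k ∈ (rx2 i).index,
          f (rx.left i) * ((LinearMap.id : H →ₗ[R] H) ((rx2 i).left k) * S ((rx2 i).right k)))
          = (counit (R := R) (rx.right i)) • f (rx.left i) := by
        intro i _
        rw [← Finset.mul_sum]
        simp only [LinearMap.id_coe, id_eq]
        rw [sum_mul_antipode_eq_smul (rx2 i), mul_smul_comm, mul_one]
      rw [Finset.sum_congr rfl e3, sum_counit_smul_map_right f rx]
    rw [e1, ← triple_sum_eq f (LinearMap.id : H →ₗ[R] H) S rx rx1 rx2, e2, hfapp]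
  rw [← claimA, step1, step2]

lemma antipode_mul' (x y : H) :
    antipode (R := R) (x * y) = antipode (R := R) x * antipode (R := R) y :=
  antipode_mul_aux x y (ℛ R x) (ℛ R y) (fun _ => ℛ R _) (fun _ => ℛ R _)
    (fun _ => ℛ R _) (fun _ => ℛ R _)

end Helpers
/-- For a commutative Hopf algebra `H` over a commutative ring `R`, with antipode `S`
and an `R`-linear derivation `Y : H → H`, the convolution `S ⋆ Y = m ∘ (S ⊗ Y) ∘ Δ`
vanishes at `1` and on products of counit-zero elements. -/
theorem antipode_conv_derivation_vanishes
    (R H : Type*) [CommRing R] [CommRing H] [HopfAlgebra R H]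
    (Y : H →ₗ[R] H) (hY : ∀ a b : H, Y (a * b) = Y a * b + a * Y b) :
    ((LinearMap.mul' R H) ∘ₗ
        (TensorProduct.map (HopfAlgebra.antipode (R := R)) Y) ∘ₗ
        (Coalgebra.comul (R := R) (A := H))) 1 = 0 ∧
    ∀ a b : H, Coalgebra.counit (R := R) a = 0 → Coalgebra.counit (R := R) b = 0 →
      ((LinearMap.mul' R H) ∘ₗ
          (TensorProduct.map (HopfAlgebra.antipode (R := R)) Y) ∘ₗ
          (Coalgebra.comul (R := R) (A := H))) (a * b) = 0 := by
  have hY1 : Y (1 : H) = 0 := by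
    have h := hY 1 1
    rw [mul_one, mul_one, one_mul] at h
    nth_rewrite 1 [← add_zero (Y 1)] at h
    exact (add_left_cancel h).symm
  constructor
  · simp only [LinearMap.comp_apply]
    rw [Bialgebra.comul_one, Algebra.TensorProduct.one_def]
    simp [hY1]
  · intro a b ha hb
    simp only [LinearMap.comp_apply]
    rw [← repr_mul (ℛ R a) (ℛ R b)]
    simp_rw [map_sum, TensorProduct.map_tmul, LinearMap.mul'_apply]
    calc ∑ i ∈ (ℛ R a).index, ∑ j ∈ (ℛ R b).index,
          HopfAlgebra.antipode (R := R) ((ℛ R a).left i * (ℛ R b).left j) *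
            Y ((ℛ R a).right i * (ℛ R b).right j)
        = ∑ i ∈ (ℛ R a).index, ∑ j ∈ (ℛ R b).index,
          ((HopfAlgebra.antipode (R := R) ((ℛ R a).left i) * Y ((ℛ R a).right i)) *
            (HopfAlgebra.antipode (R := R) ((ℛ R b).left j) * (ℛ R b).right j) +
          (HopfAlgebra.antipode (R := R) ((ℛ R a).left i) * (ℛ R a).right i) *
            (HopfAlgebra.antipode (R := R) ((ℛ R b).left j) * Y ((ℛ R b).right j))) := by
          refine Finset.sum_congr rfl fun i _ => Finset.sum_congr rfl fun j _ => ?_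
          rw [antipode_mul', hY]
          ring
      _ = (∑ i ∈ (ℛ R a).index,
            HopfAlgebra.antipode (R := R) ((ℛ R a).left i) * Y ((ℛ R a).right i)) *
          (∑ j ∈ (ℛ R b).index,
            HopfAlgebra.antipode (R := R) ((ℛ R b).left j) * (ℛ R b).right j) +
          (∑ i ∈ (ℛ R a).index,
            HopfAlgebra.antipode (R := R) ((ℛ R a).left i) * (ℛ R a).right i) *
          (∑ j ∈ (ℛ R b).index,
            HopfAlgebra.antipode (R := R) ((ℛ R b).left j) * Y ((ℛ R b).right j)) := by
          rw [Finset.sum_mul_sum, Finset.sum_mul_sum, ← Finset.sum_add_distrib]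
          exact Finset.sum_congr rfl fun i _ => Finset.sum_add_distrib
      _ = 0 := by
          rw [HopfAlgebra.sum_antipode_mul_eq_smul (ℛ R b), hb, zero_smul, mul_zero,
            HopfAlgebra.sum_antipode_mul_eq_smul (ℛ R a), ha, zero_smul, zero_mul, add_zero]
end

section
/- (i) For every r ∈ 𝓡 and every k ≥ 1, the coefficient of x^m in γ^r_k vanishes for all m < k (the lowest term of γ^r_k has order at least k). (ii) If moreover sign(s_r)·γ^r_{1,1} ≠ ℓ·Σ_{j∈𝓡} |s_j| γ^j_{1,1} for every ℓ ∈ {0,1,…,k−1}, where γ^j_{1,1} denotes the coefficient of x in γ^j_1, then the coefficient of x^k in γ^r_k is nonzero (the lowest term of γ^r_k has order exactly k). -/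
open scoped BigOperators
open PowerSeries

lemma coeff_X_mul_derivative (f : PowerSeries ℝ) (n : ℕ) :
    coeff (R := ℝ) n (X * derivative ℝ f) = n * coeff (R := ℝ) n f := by
  cases n with
  | zero => simp
  | succ m => rw [coeff_succ_X_mul, coeff_derivative]; push_cast; ring

/-- (i) For each `r` and `k ≥ 1` the coefficient of `x^m` in `γ^r_k` vanishes for
`m < k`.  (ii) If moreover `sign(s_r)·γ^r_{1,1} ≠ ℓ·Σ_{j} |s_j| γ^j_{1,1}` for all
`ℓ ∈ {0,…,k−1}`, then the coefficient of `x^k` in `γ^r_k` is nonzero. -/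
theorem gamma_k_lowest_order
    (ι : Type) [Fintype ι] [Nonempty ι]
    (s : ι → ℤ) (hs : ∀ r, s r ≠ 0)
    (γ : ι → ℕ → PowerSeries ℝ)
    (h0 : ∀ r, PowerSeries.constantCoeff (γ r 1) = 0)
    (hrec : ∀ r k, 2 ≤ k → γ r k =
      ((k : ℝ)⁻¹) • ((((s r).sign : ℝ)) • (γ r 1 * γ r (k - 1)) -
        (∑ j, ((|s j| : ℝ)) • γ j 1) *
          (PowerSeries.X * PowerSeries.derivative ℝ (γ r (k - 1))))) :
    (∀ r k m, 1 ≤ k → m < k → PowerSeries.coeff (R := ℝ) m (γ r k) = 0) ∧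
    (∀ r k, 1 ≤ k →
      (∀ ℓ : ℕ, ℓ < k →
        ((s r).sign : ℝ) * PowerSeries.coeff (R := ℝ) 1 (γ r 1) ≠
          (ℓ : ℝ) * ∑ j, (|s j| : ℝ) * PowerSeries.coeff (R := ℝ) 1 (γ j 1)) →
      PowerSeries.coeff (R := ℝ) k (γ r k) ≠ 0) := by
  -- Part (i)
  have hS0 : coeff (R := ℝ) 0 (∑ j, ((|s j| : ℝ)) • γ j 1) = 0 := by
    rw [map_sum]
    refine Finset.sum_eq_zero fun j _ => ?_
    rw [map_smul, coeff_zero_eq_constantCoeff, h0, smul_zero]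
  have hi : ∀ k, 1 ≤ k → ∀ r m, m < k → coeff (R := ℝ) m (γ r k) = 0 := by
    intro k
    induction k with
    | zero => omega
    | succ n ih =>
      intro _ r m hm
      rcases Nat.lt_or_ge n 1 with h | h
      · -- n = 0, so k = 1, m = 0
        have hn : n = 0 := by omega
        have hm0 : m = 0 := by omega
        subst hn hm0
        simpa [coeff_zero_eq_constantCoeff] using h0 r
      · -- k = n+1 ≥ 2
        rw [hrec r (n + 1) (by omega)]
        simp only [Nat.add_sub_cancel, map_smul, map_sub, smul_eq_mul]
        have h1 : coeff (R := ℝ) m (γ r 1 * γ r n) = 0 := by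
          rw [coeff_mul]
          refine Finset.sum_eq_zero fun p hp => ?_
          rw [Finset.HasAntidiagonal.mem_antidiagonal] at hp
          rcases Nat.eq_zero_or_pos p.1 with h1 | h1
          · rw [h1, coeff_zero_eq_constantCoeff, h0, zero_mul]
          · have : p.2 < n := by omega
            rw [ih h r p.2 this, mul_zero]
        have h2 : coeff (R := ℝ) m ((∑ j, ((|s j| : ℝ)) • γ j 1) *
            (X * derivative ℝ (γ r n))) = 0 := by
          rw [coeff_mul]
          refine Finset.sum_eq_zero fun p hp => ?_
          rw [Finset.HasAntidiagonal.mem_antidiagonal] at hp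
          rcases Nat.eq_zero_or_pos p.1 with h1 | h1
          · rw [h1, hS0, zero_mul]
          · have hlt : p.2 < n := by omega
            rw [coeff_X_mul_derivative, ih h r p.2 hlt, mul_zero, mul_zero]
        rw [h1, h2, mul_zero, sub_zero, mul_zero]
  refine ⟨fun r k m hk hm => hi k hk r m hm, ?_⟩
  -- Part (ii)
  have key : ∀ r k, 1 ≤ k → coeff (R := ℝ) (k + 1) (γ r (k + 1)) =
      (((k : ℝ) + 1)⁻¹) * ((((s r).sign : ℝ)) * coeff (R := ℝ) 1 (γ r 1) -
        (k : ℝ) * ∑ j, (|s j| : ℝ) * coeff (R := ℝ) 1 (γ j 1)) * coeff (R := ℝ) k (γ r k) := by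
    intro r k hk
    rw [hrec r (k + 1) (by omega)]
    simp only [Nat.add_sub_cancel, map_smul, map_sub, smul_eq_mul]
    have h1 : coeff (R := ℝ) (k + 1) (γ r 1 * γ r k) = coeff (R := ℝ) 1 (γ r 1) * coeff (R := ℝ) k (γ r k) := by
      rw [coeff_mul]
      refine Finset.sum_eq_single_of_mem (1, k) (by rw [Finset.HasAntidiagonal.mem_antidiagonal]; omega) ?_
      intro p hp hne
      rw [Finset.HasAntidiagonal.mem_antidiagonal] at hp
      rcases Nat.eq_zero_or_pos p.1 with h1 | h1
      · rw [h1, coeff_zero_eq_constantCoeff, h0, zero_mul]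
      · have : p.1 ≠ 1 ∨ p.2 ≠ k := by
          by_contra hc
          push_neg at hc
          exact hne (Prod.ext hc.1 hc.2)
        have : p.2 < k := by omega
        rw [hi k hk r p.2 this, mul_zero]
    have h2 : coeff (R := ℝ) (k + 1) ((∑ j, ((|s j| : ℝ)) • γ j 1) *
        (X * derivative ℝ (γ r k))) =
        (∑ j, (|s j| : ℝ) * coeff (R := ℝ) 1 (γ j 1)) * ((k : ℝ) * coeff (R := ℝ) k (γ r k)) := by
      have hside : ∀ p ∈ Finset.HasAntidiagonal.antidiagonal (k + 1), p ≠ (1, k) →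
          coeff (R := ℝ) p.1 (∑ j, ((|s j| : ℝ)) • γ j 1) *
            coeff (R := ℝ) p.2 (X * derivative ℝ (γ r k)) = 0 := by
        intro p hp hne
        rw [Finset.HasAntidiagonal.mem_antidiagonal] at hp
        rcases Nat.eq_zero_or_pos p.1 with h1 | h1
        · rw [h1, hS0, zero_mul]
        · have : p.1 ≠ 1 ∨ p.2 ≠ k := by
            by_contra hc
            push_neg at hc
            exact hne (Prod.ext hc.1 hc.2)
          have hlt : p.2 < k := by omega
          rw [coeff_X_mul_derivative, hi k hk r p.2 hlt, mul_zero, mul_zero]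
      rw [coeff_mul, Finset.sum_eq_single_of_mem (1, k)
        (by rw [Finset.HasAntidiagonal.mem_antidiagonal]; omega) hside]
      rw [coeff_X_mul_derivative, map_sum]
      simp [smul_eq_mul]
    rw [h1, h2]
    push_cast
    ring
  intro r k
  induction k with
  | zero => omega
  | succ n ih =>
    intro _ hne
    rcases Nat.eq_zero_or_pos n with hn | hn
    · subst hn
      intro hc
      exact hne 0 (by omega) (by rw [hc, mul_zero, Nat.cast_zero, zero_mul])
    · rw [key r n hn]
      have hfac : (((s r).sign : ℝ)) * coeff (R := ℝ) 1 (γ r 1) -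
          (n : ℝ) * ∑ j, (|s j| : ℝ) * coeff (R := ℝ) 1 (γ j 1) ≠ 0 := by
        intro hc
        exact hne n (by omega) (by linarith [sub_eq_zero.mp hc])
      have hprev : coeff (R := ℝ) n (γ r n) ≠ 0 :=
        ih hn fun ℓ hℓ => hne ℓ (by omega)
      have hinv : ((n : ℝ) + 1)⁻¹ ≠ 0 := by positivity
      exact mul_ne_zero (mul_ne_zero hinv hfac) hprev
end
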